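/- arXiv:1601.01832 — 16 statements merged into one kernel-verified Lean document; each statement's English description precedes it below -/
import Mathlib

section
/- The zygotic algebra for simple Mendelian inheritance is not an evolution algebra: the 3-dimensional commutative algebra over a field of characteristic 0 with basis {AA, Aa, aa} and products AA·AA = AA, AA·Aa = (1/2)AA + (1/2)Aa, AA·aa = Aa, Aa·Aa = (1/4)AA + (1/2)Aa + (1/4)aa, Aa·aa = (1/2)Aa + (1/2)aa, aa·aa = aa admits no basis {v1, v2, v3} with vi·vj = 0 for all i ≠ j. -/
/-- The zygotic algebra for simple Mendelian inheritance is not an evolution algebra. -/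
theorem mendel_not_evolution {K A : Type*} [Field K] [CharZero K]
    [NonUnitalNonAssocCommRing A] [Module K A] [SMulCommClass K A A] [IsScalarTower K A A]
    (e : Module.Basis (Fin 3) K A)
    (hAA : e 0 * e 0 = e 0)
    (hAAAa : e 0 * e 1 = (2 : K)⁻¹ • e 0 + (2 : K)⁻¹ • e 1)
    (hAAaa : e 0 * e 2 = e 1)
    (hAaAa : e 1 * e 1 = (4 : K)⁻¹ • e 0 + (2 : K)⁻¹ • e 1 + (4 : K)⁻¹ • e 2)
    (hAaaa : e 1 * e 2 = (2 : K)⁻¹ • e 1 + (2 : K)⁻¹ • e 2)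
    (haaaa : e 2 * e 2 = e 2) :
    ¬ ∃ v : Module.Basis (Fin 3) K A, ∀ i j, i ≠ j → v i * v j = 0 := by
  rintro ⟨v, hv⟩
  -- the inverse of 2 as an abstract element
  set h : K := (2 : K)⁻¹ with hh
  have h2 : 2 * h = 1 := by
    rw [hh]; exact mul_inv_cancel₀ two_ne_zero
  have hinv4 : (4 : K)⁻¹ = h * h := by
    rw [hh, show (4 : K) = 2 * 2 by norm_num, mul_inv]
  -- product formula in e-coordinates
  have key : ∀ x y : A,
      x * y =
        (e.repr x 0 * e.repr y 0
          + h * (e.repr x 0 * e.repr y 1 + e.repr x 1 * e.repr y 0)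
          + (h * h) * (e.repr x 1 * e.repr y 1)) • e 0
        + (h * (e.repr x 0 * e.repr y 1 + e.repr x 1 * e.repr y 0)
            + (e.repr x 0 * e.repr y 2 + e.repr x 2 * e.repr y 0)
            + h * (e.repr x 1 * e.repr y 1)
            + h * (e.repr x 1 * e.repr y 2 + e.repr x 2 * e.repr y 1)) • e 1
        + ((h * h) * (e.repr x 1 * e.repr y 1)
            + h * (e.repr x 1 * e.repr y 2 + e.repr x 2 * e.repr y 1)
            + e.repr x 2 * e.repr y 2) • e 2 := by
    intro x y
    conv_lhs => rw [← e.sum_repr x, ← e.sum_repr y]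
    simp only [Fin.sum_univ_three]
    simp only [add_mul, mul_add, smul_mul_smul_comm]
    rw [hAA, hAAAa, hAAaa, hAaAa, hAaaa, haaaa,
      mul_comm (e 1) (e 0), mul_comm (e 2) (e 0), mul_comm (e 2) (e 1),
      hAAAa, hAAaa, hAaaa, hinv4]
    module
  -- for i ≠ j all three coordinates of the product vanish
  have coords : ∀ i j : Fin 3, i ≠ j →
      (e.repr (v i) 0 * e.repr (v j) 0
          + h * (e.repr (v i) 0 * e.repr (v j) 1 + e.repr (v i) 1 * e.repr (v j) 0)
          + (h * h) * (e.repr (v i) 1 * e.repr (v j) 1) = 0)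
      ∧ (h * (e.repr (v i) 0 * e.repr (v j) 1 + e.repr (v i) 1 * e.repr (v j) 0)
            + (e.repr (v i) 0 * e.repr (v j) 2 + e.repr (v i) 2 * e.repr (v j) 0)
            + h * (e.repr (v i) 1 * e.repr (v j) 1)
            + h * (e.repr (v i) 1 * e.repr (v j) 2 + e.repr (v i) 2 * e.repr (v j) 1) = 0)
      ∧ ((h * h) * (e.repr (v i) 1 * e.repr (v j) 1)
            + h * (e.repr (v i) 1 * e.repr (v j) 2 + e.repr (v i) 2 * e.repr (v j) 1)
            + e.repr (v i) 2 * e.repr (v j) 2 = 0) := by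
    intro i j hij
    have hkey := key (v i) (v j)
    rw [hv i j hij] at hkey
    refine ⟨?_, ?_, ?_⟩
    · have := congrArg (fun z => e.repr z 0) hkey
      simpa [Finsupp.single_apply] using this.symm
    · have := congrArg (fun z => e.repr z 1) hkey
      simpa [Finsupp.single_apply] using this.symm
    · have := congrArg (fun z => e.repr z 2) hkey
      simpa [Finsupp.single_apply] using this.symm
  -- weight relation
  have hαα : ∀ i j, i ≠ j →
      (e.repr (v i) 0 + e.repr (v i) 1 + e.repr (v i) 2)
        * (e.repr (v j) 0 + e.repr (v j) 1 + e.repr (v j) 2) = 0 := by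
    intro i j hij
    obtain ⟨c0, c1, c2⟩ := coords i j hij
    linear_combination c0 + c1 + c2
      - (e.repr (v i) 0 * e.repr (v j) 1 + e.repr (v i) 1 * e.repr (v j) 0
          + (1 + h) * (e.repr (v i) 1 * e.repr (v j) 1)
          + e.repr (v i) 1 * e.repr (v j) 2 + e.repr (v i) 2 * e.repr (v j) 1) * h2
  -- mixed relation
  have hmix : ∀ i j, i ≠ j →
      (e.repr (v i) 0 + e.repr (v i) 1 + e.repr (v i) 2)
          * (e.repr (v j) 1 + 2 * e.repr (v j) 2)
        + (e.repr (v j) 0 + e.repr (v j) 1 + e.repr (v j) 2)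
          * (e.repr (v i) 1 + 2 * e.repr (v i) 2) = 0 := by
    intro i j hij
    obtain ⟨c0, c1, c2⟩ := coords i j hij
    linear_combination 2 * c1 + 4 * c2
      - (e.repr (v i) 0 * e.repr (v j) 1 + e.repr (v i) 1 * e.repr (v j) 0
          + 2 * (h + 1) * (e.repr (v i) 1 * e.repr (v j) 1)
          + 3 * (e.repr (v i) 1 * e.repr (v j) 2 + e.repr (v i) 2 * e.repr (v j) 1)) * h2
  -- the weight functional as a linear map
  set αL : A →ₗ[K] K := e.coord 0 + e.coord 1 + e.coord 2 with hαL
  have αL_apply : ∀ x : A, αL x = e.repr x 0 + e.repr x 1 + e.repr x 2 := by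
    intro x; simp [hαL, Module.Basis.coord_apply]
  -- there is an index a with nonzero weight
  obtain ⟨a, ha⟩ : ∃ a, αL (v a) ≠ 0 := by
    by_contra hno
    push_neg at hno
    have hz : αL = 0 := by
      apply v.ext
      intro i; simp [hno i]
    have h1 : αL (e 0) = 1 := by
      rw [αL_apply]
      simp [Finsupp.single_apply]
    rw [hz] at h1
    simp at h1
  rw [αL_apply] at ha
  -- the other indices have zero weight and zero β
  have hz : ∀ j, j ≠ a →
      e.repr (v j) 0 + e.repr (v j) 1 + e.repr (v j) 2 = 0
      ∧ e.repr (v j) 1 + 2 * e.repr (v j) 2 = 0 := by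
    intro j hja
    have h1 := hαα a j (Ne.symm hja)
    have hαj : e.repr (v j) 0 + e.repr (v j) 1 + e.repr (v j) 2 = 0 := by
      rcases mul_eq_zero.mp h1 with h | h
      · exact absurd h ha
      · exact h
    refine ⟨hαj, ?_⟩
    have h2' := hmix a j (Ne.symm hja)
    rw [hαj] at h2'
    simp only [zero_mul, add_zero] at h2'
    rcases mul_eq_zero.mp h2' with h | h
    · exact absurd h ha
    · exact h
  -- pick the two indices different from a
  have hpick : ∀ b : Fin 3, ∃ j1 j2 : Fin 3, j1 ≠ j2 ∧ j1 ≠ b ∧ j2 ≠ b := by decide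
  obtain ⟨j1, j2, hj12, hj1a, hj2a⟩ := hpick a
  obtain ⟨ha1, hb1⟩ := hz j1 hj1a
  obtain ⟨ha2, hb2⟩ := hz j2 hj2a
  -- both lie on the line spanned by w = e0 - 2 e1 + e2
  have hline : ∀ j, e.repr (v j) 0 + e.repr (v j) 1 + e.repr (v j) 2 = 0 →
      e.repr (v j) 1 + 2 * e.repr (v j) 2 = 0 →
      v j = (e.repr (v j) 2) • (e 0 - (2:K) • e 1 + e 2) := by
    intro j hA hB
    have e0 : e.repr (v j) 0 = e.repr (v j) 2 := by linear_combination hA - hB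
    have e1 : e.repr (v j) 1 = -(2 * e.repr (v j) 2) := by linear_combination hB
    conv_lhs => rw [← e.sum_repr (v j)]
    simp only [Fin.sum_univ_three]
    rw [e0, e1]
    module
  set γ1 : K := e.repr (v j1) 2 with hγ1def
  set γ2 : K := e.repr (v j2) 2 with hγ2def
  have hw1 := hline j1 ha1 hb1
  have hw2 := hline j2 ha2 hb2
  have hγ1 : γ1 ≠ 0 := by
    intro hzz
    have : v j1 = 0 := by rw [hw1, ← hγ1def, hzz, zero_smul]
    exact v.ne_zero j1 this
  have hcomb : γ2 • v j1 = γ1 • v j2 := by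
    rw [hw1, hw2, smul_smul, smul_smul, mul_comm]
  have hfin := congrArg (fun z => v.repr z j2) hcomb
  simp [Finsupp.single_apply, hj12] at hfin
  exact hγ1 hfin.symm
end

section
/- Let A be the 3-dimensional evolution algebra over a field K with natural basis {e1, e2, e3} and products e1² = e1 + e2, e2² = -(e1 + e2), e3² = -e2 + e3. Then the subalgebra of A generated by u1 = e1 + e2 and u2 = e1 + e3 is a 2-dimensional subalgebra which admits no natural basis; i.e., the class of evolution algebras is not closed under subalgebras. -/
/-- The subalgebra generated by `u₁ = e₁ + e₂` and `u₂ = e₁ + e₃` of the given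
3-dimensional evolution algebra is a 2-dimensional subalgebra with no natural basis. -/
theorem subalgebra_not_evolution {K A : Type*} [Field K]
    [NonUnitalNonAssocCommRing A] [Module K A] [SMulCommClass K A A] [IsScalarTower K A A]
    (e : Module.Basis (Fin 3) K A)
    (hnat : ∀ i j, i ≠ j → e i * e j = 0)
    (h1 : e 0 * e 0 = e 0 + e 1)
    (h2 : e 1 * e 1 = -(e 0 + e 1))
    (h3 : e 2 * e 2 = -(e 1) + e 2) :
    ∀ S : Submodule K A, S = Submodule.span K {e 0 + e 1, e 0 + e 2} →
      (∀ x ∈ S, ∀ y ∈ S, x * y ∈ S) ∧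
      Module.finrank K S = 2 ∧
      ¬ ∃ v : Module.Basis (Fin 2) K S, ∀ i j, i ≠ j → (v i : A) * (v j : A) = 0 := by
  intro S hS
  have h01 := hnat 0 1 (by decide)
  have h02 := hnat 0 2 (by decide)
  have h10 := hnat 1 0 (by decide)
  have h12 := hnat 1 2 (by decide)
  have h20 := hnat 2 0 (by decide)
  have h21 := hnat 2 1 (by decide)
  set u := e 0 + e 1 with hu
  set w := e 0 + e 2 with hw
  have hu2 : u * u = 0 := by rw [hu, add_mul, mul_add, mul_add, h1, h01, h10, h2]; abel
  have huw : u * w = u := by rw [hu, hw, add_mul, mul_add, mul_add, h1, h02, h10, h12]; abel_nf; exact hu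
  have hwu : w * u = u := by rw [mul_comm]; exact huw
  have hww : w * w = w := by rw [hw, add_mul, mul_add, mul_add, h1, h02, h20, h3, hu]; abel
  have key : ∀ a b c d : K, (a • u + b • w) * (c • u + d • w)
      = (a * d + b * c) • u + (b * d) • w := by
    intro a b c d
    rw [add_mul, mul_add, mul_add]
    simp only [smul_mul_assoc, mul_smul_comm, hu2, huw, hwu, hww, smul_zero, smul_smul]
    module
  have hLI : LinearIndependent K ![u, w] := by
    rw [LinearIndependent.pair_iff]
    intro s t hst
    constructor
    · have := congrArg (fun z => e.repr z 1) hst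
      simpa [hu, hw, Finsupp.single_apply] using this
    · have := congrArg (fun z => e.repr z 2) hst
      simpa [hu, hw, Finsupp.single_apply] using this
  refine ⟨?_, ?_, ?_⟩
  · intro x hx y hy
    rw [hS] at hx hy ⊢
    obtain ⟨a, b, hab⟩ := Submodule.mem_span_pair.mp hx
    obtain ⟨c, d, hcd⟩ := Submodule.mem_span_pair.mp hy
    rw [← hab, ← hcd, key]
    exact Submodule.mem_span_pair.mpr ⟨_, _, rfl⟩
  · rw [hS]
    have hset : ({u, w} : Set A) = Set.range ![u, w] := by
      ext x
      simp [Fin.exists_fin_two, eq_comm, or_comm]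
    rw [hset, finrank_span_eq_card hLI]
    simp
  · rintro ⟨v, hv⟩
    have hv01 : (v 0 : A) * (v 1 : A) = 0 := hv 0 1 (by decide)
    have hm0 : (v 0 : A) ∈ Submodule.span K ({u, w} : Set A) := by rw [← hS]; exact (v 0).2
    have hm1 : (v 1 : A) ∈ Submodule.span K ({u, w} : Set A) := by rw [← hS]; exact (v 1).2
    obtain ⟨a, b, hab⟩ := Submodule.mem_span_pair.mp hm0
    obtain ⟨c, d, hcd⟩ := Submodule.mem_span_pair.mp hm1
    have hVLI : ∀ s t : K, s • (v 0 : A) + t • (v 1 : A) = 0 → s = 0 ∧ t = 0 := by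
      have h' : LinearIndependent K (fun i => ((v i : A))) :=
        v.linearIndependent.map' S.subtype S.ker_subtype
      have h'' : LinearIndependent K ![(v 0 : A), (v 1 : A)] := by
        convert h' using 1
        funext i
        fin_cases i <;> rfl
      exact LinearIndependent.pair_iff.mp h''
    have hprod : (a * d + b * c) • u + (b * d) • w = 0 := by
      rw [← key, hab, hcd, hv01]
    have hcoef := LinearIndependent.pair_iff.mp hLI _ _ hprod
    have hne0 : (v 0 : A) ≠ 0 := by
      simpa using v.ne_zero 0
    have hne1 : (v 1 : A) ≠ 0 := by
      simpa using v.ne_zero 1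
    have case_bd : b = 0 → d = 0 → False := by
      intro hb hd
      have h0' : (v 0 : A) = a • u := by rw [← hab, hb]; simp
      have h1' : (v 1 : A) = c • u := by rw [← hcd, hd]; simp
      have hz := hVLI c (-a) (by rw [h0', h1', smul_smul, smul_smul, mul_comm]; module)
      exact hne1 (by rw [h1', hz.1, zero_smul])
    rcases mul_eq_zero.mp hcoef.2 with hb | hd
    · have had : a * d = 0 := by
        have := hcoef.1
        rw [hb] at this
        simpa using this
      rcases mul_eq_zero.mp had with ha | hd
      · exact hne0 (by rw [← hab, ha, hb]; simp)
      · exact (case_bd hb hd).elim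
    · have hbc : b * c = 0 := by
        have := hcoef.1
        rw [hd] at this
        simpa using this
      rcases mul_eq_zero.mp hbc with hb | hc
      · exact (case_bd hb hd).elim
      · exact hne1 (by rw [← hcd, hc, hd]; simp)
end

section
/- Let A be the 3-dimensional evolution algebra over a field K with natural basis {e1, e2, e3} and products e1² = e2 + e3, e2² = e1 + e2, e3² = -(e1 + e2). Then I = span{e1², e2²} = {α e1 + (α+β) e2 + β e3 : α, β ∈ K} is a 2-dimensional ideal of A that has no natural basis; i.e., an ideal of an evolution algebra need not be an evolution ideal. -/
/-- In the evolution algebra with `e₁² = e₂ + e₃`, `e₂² = e₁ + e₂`, `e₃² = -(e₁+e₂)`,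
the span of `e₁²` and `e₂²` is a 2-dimensional ideal with no natural basis. -/
theorem ideal_not_evolution_ideal {K A : Type*} [Field K]
    [NonUnitalNonAssocCommRing A] [Module K A] [SMulCommClass K A A] [IsScalarTower K A A]
    (e : Module.Basis (Fin 3) K A)
    (hnat : ∀ i j, i ≠ j → e i * e j = 0)
    (h1 : e 0 * e 0 = e 1 + e 2)
    (h2 : e 1 * e 1 = e 0 + e 1)
    (h3 : e 2 * e 2 = -(e 0 + e 1)) :
    ∀ I : Submodule K A, I = Submodule.span K {e 0 * e 0, e 1 * e 1} →
      (I : Set A) = {x | ∃ α β : K, x = α • e 0 + (α + β) • e 1 + β • e 2} ∧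
      (∀ x ∈ I, ∀ a : A, x * a ∈ I) ∧
      Module.finrank K I = 2 ∧
      ¬ ∃ v : Module.Basis (Fin 2) K I, ∀ i j, i ≠ j → (v i : A) * (v j : A) = 0 := by
  intro I hI
  subst hI
  rw [h1, h2]
  have h01 : e 0 * e 1 = 0 := hnat 0 1 (by decide)
  have h02 : e 0 * e 2 = 0 := hnat 0 2 (by decide)
  have h10 : e 1 * e 0 = 0 := hnat 1 0 (by decide)
  have h12 : e 1 * e 2 = 0 := hnat 1 2 (by decide)
  have h20 : e 2 * e 0 = 0 := hnat 2 0 (by decide)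
  have h21 : e 2 * e 1 = 0 := hnat 2 1 (by decide)
  have key : ∀ a b c : K, a • e 0 + b • e 1 + c • e 2 = 0 → a = 0 ∧ b = 0 ∧ c = 0 := by
    intro a b c h
    have := Fintype.linearIndependent_iff.mp e.linearIndependent ![a, b, c]
      (by simpa [Fin.sum_univ_three] using h)
    exact ⟨this 0, this 1, this 2⟩
  have hmul : ∀ p q r u w z : K,
      (p • e 0 + q • e 1 + r • e 2) * (u • e 0 + w • e 1 + z • e 2)
        = (p * u) • (e 0 * e 0) + (q * w) • (e 1 * e 1) + (r * z) • (e 2 * e 2) := by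
    intro p q r u w z
    simp only [add_mul, mul_add, smul_mul_smul_comm, h01, h02, h10, h12, h20, h21,
      smul_zero, add_zero, zero_add]
  have hset : (Submodule.span K {e 1 + e 2, e 0 + e 1} : Set A)
      = {x | ∃ α β : K, x = α • e 0 + (α + β) • e 1 + β • e 2} := by
    ext x
    simp only [SetLike.mem_coe, Submodule.mem_span_pair, Set.mem_setOf_eq]
    constructor
    · rintro ⟨s, t, rfl⟩
      exact ⟨t, s, by module⟩
    · rintro ⟨α, β, rfl⟩
      exact ⟨β, α, by module⟩
  refine ⟨hset, ?_, ?_, ?_⟩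
  · -- ideal property
    intro x hx a
    obtain ⟨α, β, rfl⟩ := (Set.ext_iff.mp hset x).mp hx
    have ha : a = e.repr a 0 • e 0 + e.repr a 1 • e 1 + e.repr a 2 • e 2 := by
      have := e.sum_repr a
      rw [Fin.sum_univ_three] at this
      exact this.symm
    rw [ha, hmul, h1, h2, h3]
    exact Submodule.mem_span_pair.mpr
      ⟨α * e.repr a 0, (α + β) * e.repr a 1 - β * e.repr a 2, by module⟩
  · -- finrank = 2
    have hli : LinearIndependent K ![e 1 + e 2, e 0 + e 1] := by
      rw [Fintype.linearIndependent_iff]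
      intro g hg
      have hg0 : g 0 • (e 1 + e 2) + g 1 • (e 0 + e 1) = 0 := by
        simpa [Fin.sum_univ_two] using hg
      have hg' : g 1 • e 0 + (g 0 + g 1) • e 1 + g 0 • e 2 = 0 := by
        rw [← hg0]; module
      obtain ⟨ha0, hb0, hc0⟩ := key _ _ _ hg'
      intro i
      fin_cases i
      · rw [ha0, add_zero] at hb0; exact hb0
      · exact ha0
    have hr : ({e 1 + e 2, e 0 + e 1} : Set A) = Set.range ![e 1 + e 2, e 0 + e 1] := by
      simp [Matrix.range_cons, Matrix.range_empty, Set.pair_comm]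
    rw [hr, finrank_span_eq_card hli]
    simp
  · -- no natural basis
    rintro ⟨v, hv⟩
    have ne0 : ∀ i, (v i : A) ≠ 0 := fun i h =>
      v.ne_zero i (ZeroMemClass.coe_eq_zero.mp h)
    obtain ⟨α, β, hv0⟩ := (Set.ext_iff.mp hset _).mp (v 0).2
    obtain ⟨γ, δ, hv1⟩ := (Set.ext_iff.mp hset _).mp (v 1).2
    have hprod : (v 0 : A) * (v 1 : A) = 0 := hv 0 1 (by decide)
    rw [hv0, hv1, hmul, h1, h2, h3] at hprod
    have hco : ((α + β) * (γ + δ) - β * δ) • e 0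
        + (α * γ + ((α + β) * (γ + δ) - β * δ)) • e 1 + (α * γ) • e 2 = 0 := by
      rw [← hprod]; module
    obtain ⟨hQ, _, hP⟩ := key _ _ _ hco
    have d2 : α * δ + β * γ = 0 := by linear_combination hQ - hP
    have prop_case : α = 0 → γ = 0 → False := by
      intro hα hγ
      have hrel : δ • v 0 - β • v 1 = 0 := by
        have hc : ((δ • v 0 - β • v 1 : _) : A) = 0 := by
          rw [Submodule.coe_sub, Submodule.coe_smul, Submodule.coe_smul, hv0, hv1, hα, hγ]
          module
        exact ZeroMemClass.coe_eq_zero.mp hc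
      have hz := Fintype.linearIndependent_iff.mp v.linearIndependent ![δ, -β] (by
        rw [Fin.sum_univ_two]
        simpa [neg_smul, ← sub_eq_add_neg] using hrel)
      have hβ0 : β = 0 := by simpa using hz 1
      exact ne0 0 (by rw [hv0, hα, hβ0]; module)
    rcases mul_eq_zero.mp hP with hα | hγ
    · have hβγ : β * γ = 0 := by linear_combination d2 - δ * hα
      rcases mul_eq_zero.mp hβγ with hβ | hγ
      · exact ne0 0 (by rw [hv0, hα, hβ]; module)
      · exact prop_case hα hγ
    · have hαδ : α * δ = 0 := by linear_combination d2 - β * hγ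
      rcases mul_eq_zero.mp hαδ with hα | hδ
      · exact prop_case hα hγ
      · exact ne0 1 (by rw [hv1, hγ, hδ]; module)
end

section
/- If A is an evolution algebra and I is an ideal of A, then the quotient algebra A/I is an evolution algebra, i.e., A/I admits a natural basis. -/
/-- The quotient of an evolution algebra by an ideal is an evolution algebra:
any quotient `Q` of `A` (i.e. the image of a surjective product-preserving linear
map with kernel the ideal `I`) admits a natural basis. -/
theorem quotient_is_evolution {K A Q : Type*} [Field K]
    [NonUnitalNonAssocCommRing A] [Module K A] [SMulCommClass K A A] [IsScalarTower K A A]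
    [NonUnitalNonAssocCommRing Q] [Module K Q] [SMulCommClass K Q Q] [IsScalarTower K Q Q]
    {ι : Type*} (e : Module.Basis ι K A) (hnat : ∀ i j, i ≠ j → e i * e j = 0)
    (I : Submodule K A) (hI : ∀ x ∈ I, ∀ a : A, x * a ∈ I)
    (π : A →ₗ[K] Q) (hmul : ∀ x y : A, π (x * y) = π x * π y)
    (hsurj : Function.Surjective π) (hker : LinearMap.ker π = I) :
    ∃ (s : Set Q) (b : Module.Basis s K Q), ∀ i j : s, i ≠ j → b i * b j = 0 := by
  set t : Set Q := Set.range (fun i => π (e i)) with ht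
  have hspan : Submodule.span K t = ⊤ := by
    have h1 : t = π '' Set.range e := by
      rw [ht, ← Set.range_comp]; rfl
    rw [h1, ← Submodule.map_span, e.span_eq, Submodule.map_top,
      LinearMap.range_eq_top.mpr hsurj]
  obtain ⟨s, hst, hs_span, hs_li⟩ := exists_linearIndependent K t
  refine ⟨s, Module.Basis.mk hs_li ?_, ?_⟩
  · rw [Subtype.range_coe, hs_span, hspan]
  · intro i j hij
    obtain ⟨a, ha⟩ := hst i.2
    obtain ⟨b, hb⟩ := hst j.2
    have hab : a ≠ b := by
      rintro rfl
      exact hij (Subtype.ext (ha.symm.trans hb))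
    rw [Module.Basis.mk_apply, Module.Basis.mk_apply, ← ha, ← hb, ← hmul, hnat a b hab, map_zero]
end

section
/- If f : A → A' is an algebra homomorphism between evolution algebras A and A', then the image of f is an evolution algebra (it admits a natural basis). -/
/-- The image of an algebra homomorphism between evolution algebras is an
evolution algebra (it admits a natural basis). -/
theorem image_is_evolution {K A A' : Type*} [Field K]
    [NonUnitalNonAssocCommRing A] [Module K A] [SMulCommClass K A A] [IsScalarTower K A A]
    [NonUnitalNonAssocCommRing A'] [Module K A'] [SMulCommClass K A' A'] [IsScalarTower K A' A']
    {ι ι' : Type*} (e : Module.Basis ι K A) (hnat : ∀ i j, i ≠ j → e i * e j = 0)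
    (e' : Module.Basis ι' K A') (hnat' : ∀ i j, i ≠ j → e' i * e' j = 0)
    (f : A →ₗ[K] A') (hmul : ∀ x y : A, f (x * y) = f x * f y) :
    ∃ (s : Set (LinearMap.range f)) (b : Module.Basis s K (LinearMap.range f)),
      ∀ i j : s, i ≠ j → (b i : A') * (b j : A') = 0 := by
  classical
  set g : A →ₗ[K] LinearMap.range f := f.rangeRestrict with hg
  have hspan : Submodule.span K (Set.range (g ∘ e)) = ⊤ := by
    rw [Set.range_comp, ← Submodule.map_span, e.span_eq, Submodule.map_top,
      LinearMap.range_rangeRestrict]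
  obtain ⟨s, hs_sub, hs_span, hs_li⟩ := exists_linearIndependent K (Set.range (g ∘ e))
  have htop : ⊤ ≤ Submodule.span K (Set.range ((↑) : s → LinearMap.range f)) := by
    rw [Subtype.range_coe, hs_span, hspan]
  refine ⟨s, Module.Basis.mk hs_li htop, ?_⟩
  intro i j hij
  obtain ⟨k, hk⟩ := hs_sub i.2
  obtain ⟨l, hl⟩ := hs_sub j.2
  have hkl : k ≠ l := by
    rintro rfl
    exact hij (Subtype.ext (hk.symm.trans hl))
  have hi : ((Module.Basis.mk hs_li htop i : LinearMap.range f) : A') = f (e k) := by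
    rw [Module.Basis.mk_apply, ← hk]; rfl
  have hj : ((Module.Basis.mk hs_li htop j : LinearMap.range f) : A') = f (e l) := by
    rw [Module.Basis.mk_apply, ← hl]; rfl
  rw [hi, hj, ← hmul, hnat k l hkl, map_zero]
end

section
/- Let A be an evolution algebra with natural basis B = {e_i : i ∈ Λ} and let Λ₀(B) = {i ∈ Λ : e_i² = 0}. Then the annihilator ann(A) = {x ∈ A : xA = 0} equals the linear span of {e_i : i ∈ Λ₀(B)}. -/
/-- The annihilator of an evolution algebra is the linear span of the natural basis
elements of zero square. -/
theorem annihilator_eq_span_zero_squares {K A : Type*} [Field K]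
    [NonUnitalNonAssocCommRing A] [Module K A] [SMulCommClass K A A] [IsScalarTower K A A]
    {ι : Type*} (e : Module.Basis ι K A) (hnat : ∀ i j, i ≠ j → e i * e j = 0) :
    {x : A | ∀ a : A, x * a = 0} =
      ↑(Submodule.span K (e '' {i : ι | e i * e i = 0})) := by
  ext x
  simp only [Set.mem_setOf_eq, SetLike.mem_coe]
  constructor
  · intro hx
    have hrep := e.linearCombination_repr x
    rw [← hrep, Finsupp.linearCombination_apply, Finsupp.sum]
    apply Submodule.sum_mem
    intro i hi
    apply Submodule.smul_mem
    apply Submodule.subset_span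
    refine ⟨i, ?_, rfl⟩
    have h := hx (e i)
    rw [← hrep, Finsupp.linearCombination_apply, Finsupp.sum, Finset.sum_mul] at h
    have h2 : ∑ j ∈ (e.repr x).support, (e.repr x j) • (e j * e i) = 0 := by
      simpa [smul_mul_assoc] using h
    rw [Finset.sum_eq_single i] at h2
    · exact (smul_eq_zero.mp h2).resolve_left (Finsupp.mem_support_iff.mp hi)
    · intro j _ hne; rw [hnat j i hne, smul_zero]
    · intro h'; exact absurd hi h'
  · intro hx a
    induction hx using Submodule.span_induction with
    | mem y hy =>
      obtain ⟨i, hi, rfl⟩ := hy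
      have ha := e.linearCombination_repr a
      rw [← ha, Finsupp.linearCombination_apply, Finsupp.sum, Finset.mul_sum]
      apply Finset.sum_eq_zero
      intro j _
      rcases eq_or_ne i j with rfl | hne
      · rw [mul_smul_comm, hi, smul_zero]
      · rw [mul_smul_comm, hnat i j hne, smul_zero]
    | zero => rw [zero_mul]
    | add y z _ _ hy hz => rw [add_mul, hy, hz, add_zero]
    | smul c y _ hy => rw [smul_mul_assoc, hy, smul_zero]
end

section
/- An evolution algebra A is non-degenerate (i.e., has some natural basis all of whose elements have nonzero square) if and only if ann(A) = 0. Consequently, if one natural basis of A consists of elements of nonzero square, then every natural basis of A consists of elements of nonzero square. -/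
private lemma mul_eq_zero_of_basis {K A : Type*} [Field K]
    [NonUnitalNonAssocCommRing A] [Module K A] [SMulCommClass K A A] [IsScalarTower K A A]
    {ι : Type*} (b : Module.Basis ι K A) {x : A}
    (h : ∀ i, x * b i = 0) (a : A) : x * a = 0 := by
  conv_lhs => rw [← b.linearCombination_repr a]
  rw [Finsupp.linearCombination_apply, Finsupp.sum, Finset.mul_sum]
  simp [mul_smul_comm, h]

private lemma ann_eq_zero' {K A : Type*} [Field K]
    [NonUnitalNonAssocCommRing A] [Module K A] [SMulCommClass K A A] [IsScalarTower K A A]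
    {ι : Type*} (b : Module.Basis ι K A)
    (hnat : ∀ i j, i ≠ j → b i * b j = 0) (hsq : ∀ i, b i * b i ≠ 0)
    {x : A} (hx : ∀ a, x * a = 0) : x = 0 := by
  have hc : ∀ j, b.repr x j = 0 := by
    intro j
    have hxj := hx (b j)
    conv_lhs at hxj => rw [← b.linearCombination_repr x]
    rw [Finsupp.linearCombination_apply, Finsupp.sum, Finset.sum_mul] at hxj
    rw [Finset.sum_eq_single j
      (fun i _ hij => by rw [smul_mul_assoc, hnat i j hij, smul_zero])
      (fun hj => by simp [Finsupp.notMem_support_iff.mp hj])] at hxj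
    rw [smul_mul_assoc, smul_eq_zero] at hxj
    exact hxj.resolve_right (hsq j)
  apply b.repr.injective
  ext j
  simp [hc]

private lemma key_lemma {K A : Type*} [Field K]
    [NonUnitalNonAssocCommRing A] [Module K A] [SMulCommClass K A A] [IsScalarTower K A A]
    {ι : Type*} (b : Module.Basis ι K A) (hnat : ∀ i j, i ≠ j → b i * b j = 0)
    (hann : ∀ x : A, (∀ a : A, x * a = 0) → x = 0) : ∀ i, b i * b i ≠ 0 := by
  intro i hsq
  refine b.ne_zero i (hann _ (mul_eq_zero_of_basis b (fun j => ?_)))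
  by_cases h : i = j
  · subst h; exact hsq
  · exact hnat i j h

/-- An evolution algebra is non-degenerate iff its annihilator is zero; consequently
non-degeneracy does not depend on the choice of natural basis. -/
theorem nondegenerate_iff_ann_zero {K A : Type*} [Field K]
    [NonUnitalNonAssocCommRing A] [Module K A] [SMulCommClass K A A] [IsScalarTower K A A]
    {ι₀ : Type*} (e₀ : Module.Basis ι₀ K A) (hnat₀ : ∀ i j, i ≠ j → e₀ i * e₀ j = 0) :
    ((∃ (s : Set A) (b : Module.Basis s K A),
        (∀ i j : s, i ≠ j → b i * b j = 0) ∧ ∀ i : s, b i * b i ≠ 0) ↔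
      (∀ x : A, (∀ a : A, x * a = 0) → x = 0)) ∧
    (∀ {ι ι' : Type*} (b : Module.Basis ι K A) (b' : Module.Basis ι' K A),
      (∀ i j, i ≠ j → b i * b j = 0) → (∀ i, b i * b i ≠ 0) →
      (∀ i j, i ≠ j → b' i * b' j = 0) → ∀ i, b' i * b' i ≠ 0) := by
  constructor
  · constructor
    · rintro ⟨s, b, hnat, hsq⟩ x hx
      exact ann_eq_zero' b hnat hsq hx
    · intro hann
      refine ⟨Set.range e₀, e₀.reindexRange, fun i j hij => ?_, fun i => ?_⟩
      · obtain ⟨_, a, rfl⟩ := i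
        obtain ⟨_, c, rfl⟩ := j
        rw [Module.Basis.reindexRange_apply, Module.Basis.reindexRange_apply]
        exact hnat₀ a c (fun h => hij (by simp [h]))
      · rw [Module.Basis.reindexRange_apply]
        obtain ⟨_, a, rfl⟩ := i
        exact key_lemma e₀ hnat₀ hann a
  · intro ι ι' b b' hnat hsq hnat'
    exact key_lemma b' hnat' (fun x hx => ann_eq_zero' b hnat hsq hx)
end

section
/- For any two natural bases B and B' of an evolution algebra A, the cardinality of {e ∈ B : e² = 0} equals the cardinality of {e ∈ B' : e² = 0}; both equal the dimension of ann(A). -/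
/-- The annihilator of a commutative nonassociative algebra, as a submodule. -/
def annSubmodule (K A : Type*) [Field K] [NonUnitalNonAssocCommRing A] [Module K A]
    [SMulCommClass K A A] [IsScalarTower K A A] : Submodule K A where
  carrier := {x | ∀ a : A, x * a = 0}
  add_mem' := by intro x y hx hy a; rw [add_mul, hx a, hy a, add_zero]
  zero_mem' := by intro a; rw [zero_mul]
  smul_mem' := by intro c x hx a; rw [smul_mul_assoc, hx a, smul_zero]

universe u v w

section Aux
variable {K : Type*} {A : Type u} [Field K]
    [NonUnitalNonAssocCommRing A] [Module K A] [SMulCommClass K A A] [IsScalarTower K A A]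
    {ι : Type v} (b : Module.Basis ι K A)

lemma ann_eq_span (hb : ∀ i j, i ≠ j → b i * b j = 0) :
    annSubmodule K A = Submodule.span K (b '' {i | b i * b i = 0}) := by
  apply le_antisymm
  · intro x hx
    rw [Module.Basis.mem_span_image]
    intro j hj
    simp only [Set.mem_setOf_eq]
    by_contra hne
    -- x * b j = 0
    have h0 : x * b j = 0 := hx (b j)
    have hx' : x = Finsupp.linearCombination K b (b.repr x) := (b.linearCombination_repr x).symm
    rw [hx', Finsupp.linearCombination_apply, Finsupp.sum_mul] at h0
    have : (b.repr x).sum (fun i c => (c • b i) * b j) =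
        (b.repr x) j • (b j * b j) := by
      rw [Finsupp.sum_eq_single j]
      · rw [smul_mul_assoc]
      · intro i _ hij
        rw [smul_mul_assoc, hb i j hij, smul_zero]
      · intro _; rw [zero_smul, zero_mul]
    rw [this] at h0
    rcases smul_eq_zero.mp h0 with h | h
    · exact absurd h (Finsupp.mem_support_iff.mp hj)
    · exact hne h
  · rw [Submodule.span_le]
    rintro _ ⟨i, hi, rfl⟩
    intro a
    have : LinearMap.mulLeft K (b i) = 0 := by
      apply b.ext
      intro j
      rcases eq_or_ne i j with rfl | hij
      · simpa using hi
      · simpa using hb i j hij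
    simpa using congrFun (congrArg DFunLike.coe this) a

noncomputable def annBasis (hb : ∀ i j, i ≠ j → b i * b j = 0) : Module.Basis {i : ι // b i * b i = 0} K (annSubmodule K A) := by
  have li : LinearIndependent K (fun i : {i : ι // b i * b i = 0} => b i) :=
    b.linearIndependent.comp Subtype.val Subtype.val_injective
  refine (Module.Basis.span li).map (LinearEquiv.ofEq _ _ ?_)
  rw [ann_eq_span b hb]
  congr 1
  ext x
  simp [Set.range, Set.mem_image]

end Aux

/-- For any two natural bases of an evolution algebra, the number of basis elements of
zero square is the same; both equal the dimension of the annihilator. -/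
theorem card_zero_squares_eq {K : Type*} {A : Type u} [Field K]
    [NonUnitalNonAssocCommRing A] [Module K A] [SMulCommClass K A A] [IsScalarTower K A A]
    {ι : Type v} {ι' : Type w} (b : Module.Basis ι K A) (b' : Module.Basis ι' K A)
    (hb : ∀ i j, i ≠ j → b i * b j = 0) (hb' : ∀ i j, i ≠ j → b' i * b' j = 0) :
    Cardinal.lift.{w} (Cardinal.mk {i : ι // b i * b i = 0}) =
      Cardinal.lift.{v} (Cardinal.mk {i : ι' // b' i * b' i = 0}) ∧
    Cardinal.lift.{u} (Cardinal.mk {i : ι // b i * b i = 0}) =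
      Cardinal.lift.{v} (Module.rank K (annSubmodule K A)) := by
  have B := annBasis b hb
  have B' := annBasis b' hb'
  exact ⟨mk_eq_mk_of_basis B B', B.mk_eq_rank⟩
end

section
/- Let I be a non-zero ideal of an evolution algebra A with natural basis B = {e_i : i ∈ Λ}. If I has the absorption property, then there exists a subset B₁ ⊆ B that is a natural basis of I; in particular I is an evolution ideal with the extension property. -/
private lemma mul_basis_eq {K A : Type*} [Field K]
    [NonUnitalNonAssocCommRing A] [Module K A] [SMulCommClass K A A] [IsScalarTower K A A]
    {ι : Type*} (e : Module.Basis ι K A) (hnat : ∀ i j, i ≠ j → e i * e j = 0)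
    (y : A) (i : ι) : y * e i = e.repr y i • (e i * e i) := by
  conv_lhs => rw [← e.linearCombination_repr y]
  rw [Finsupp.linearCombination_apply, Finsupp.sum_mul]
  rw [Finsupp.sum_eq_single i]
  · rw [smul_mul_assoc]
  · intro j _ hj
    rw [smul_mul_assoc, hnat j i hj, smul_zero]
  · intro _
    rw [zero_smul, zero_mul]

/-- If a non-zero ideal `I` of an evolution algebra has the absorption property, then
a subset of the natural basis `B` is a natural basis of `I`; in particular `I` is an
evolution ideal with the extension property. -/
theorem absorption_subset_basis {K A : Type*} [Field K]
    [NonUnitalNonAssocCommRing A] [Module K A] [SMulCommClass K A A] [IsScalarTower K A A]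
    {ι : Type*} (e : Module.Basis ι K A) (hnat : ∀ i j, i ≠ j → e i * e j = 0)
    (I : Submodule K A) (hI : ∀ x ∈ I, ∀ a : A, x * a ∈ I) (hIne : I ≠ ⊥)
    (habs : ∀ x : A, (∀ a : A, x * a ∈ I) → x ∈ I) :
    ∃ s : Set ι, Submodule.span K (e '' s) = I ∧
      ∃ b₁ : Module.Basis s K I, ∀ i : s, (b₁ i : A) = e i := by
  set s : Set ι := {i | e i ∈ I} with hs
  -- key: any basis vector in the support of an element of I lies in I
  have key : ∀ x ∈ I, ∀ i : ι, e.repr x i ≠ 0 → e i ∈ I := by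
    intro x hx i hc
    -- e i * e i ∈ I
    have hsq : e i * e i ∈ I := by
      have h1 : x * e i ∈ I := hI x hx (e i)
      rw [mul_basis_eq e hnat x i] at h1
      have := I.smul_mem (e.repr x i)⁻¹ h1
      rwa [smul_smul, inv_mul_cancel₀ hc, one_smul] at this
    apply habs
    intro a
    rw [mul_comm, mul_basis_eq e hnat a i]
    exact I.smul_mem _ hsq
  have hspan : Submodule.span K (e '' s) = I := by
    apply le_antisymm
    · rw [Submodule.span_le]
      rintro _ ⟨i, hi, rfl⟩
      exact hi
    · intro x hx
      have hxr := e.linearCombination_repr x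
      rw [← hxr, Finsupp.linearCombination_apply]
      apply Submodule.sum_mem
      intro i hi
      apply Submodule.smul_mem
      apply Submodule.subset_span
      exact ⟨i, key x hx i (Finsupp.mem_support_iff.mp hi), rfl⟩
  refine ⟨s, hspan, ?_⟩
  have hli : LinearIndependent K (fun i : s => e i) :=
    e.linearIndependent.comp Subtype.val Subtype.val_injective
  have hrange : Submodule.span K (Set.range fun i : s => e i) = I := by
    rw [← Set.image_eq_range]
    exact hspan
  refine ⟨(Module.Basis.span hli).map (LinearEquiv.ofEq _ _ hrange), ?_⟩
  intro i
  simp [Module.Basis.span_apply]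
end

section
/- For an evolution algebra A, the following are equivalent: rad(A) = 0; ann(A) = 0; A is non-degenerate. -/
/-- `N` is an ideal of the commutative algebra `A` with the absorption property. -/
def IsAbsorbIdeal {K A : Type*} [Field K] [NonUnitalNonAssocCommRing A] [Module K A]
    [SMulCommClass K A A] [IsScalarTower K A A] (N : Submodule K A) : Prop :=
  (∀ x ∈ N, ∀ a : A, x * a ∈ N) ∧ ∀ x : A, (∀ a : A, x * a ∈ N) → x ∈ N

/-- If `x` annihilates every basis vector then `x` is in the annihilator. -/
lemma mem_ann_of_basis {K A : Type*} [Field K]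
    [NonUnitalNonAssocCommRing A] [Module K A] [SMulCommClass K A A] [IsScalarTower K A A]
    {ι : Type*} (e : Module.Basis ι K A) {x : A} (hx : ∀ i, x * e i = 0) :
    x ∈ annSubmodule K A := by
  intro a
  have hker : LinearMap.ker (LinearMap.mulLeft K x) = ⊤ := by
    rw [eq_top_iff, ← e.span_eq]
    refine Submodule.span_le.mpr ?_
    rintro _ ⟨i, rfl⟩
    exact hx i
  have : a ∈ LinearMap.ker (LinearMap.mulLeft K x) := hker ▸ Submodule.mem_top
  simpa using this

/-- For an evolution algebra `A`: `rad(A) = 0` iff `ann(A) = 0` iff `A` is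
non-degenerate. -/
theorem rad_zero_iff_ann_zero_iff_nondegenerate {K A : Type*} [Field K]
    [NonUnitalNonAssocCommRing A] [Module K A] [SMulCommClass K A A] [IsScalarTower K A A]
    {ι : Type*} (e : Module.Basis ι K A) (hnat : ∀ i j, i ≠ j → e i * e j = 0) :
    (sInf {M : Submodule K A | IsAbsorbIdeal M} = ⊥ ↔ annSubmodule K A = ⊥) ∧
    (annSubmodule K A = ⊥ ↔
      ∃ (s : Set A) (b : Module.Basis s K A),
        (∀ i j : s, i ≠ j → b i * b j = 0) ∧ ∀ i : s, b i * b i ≠ 0) := by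
  have hannle : ∀ M : Submodule K A, IsAbsorbIdeal M → annSubmodule K A ≤ M := by
    intro M hM x hx
    exact hM.2 x fun a => by rw [hx a]; exact M.zero_mem
  constructor
  · constructor
    · intro h
      rw [eq_bot_iff, ← h]
      exact le_sInf fun M hM => hannle M hM
    · intro h
      rw [eq_bot_iff]
      refine sInf_le ?_
      constructor
      · intro x hx a
        simp only [Submodule.mem_bot] at hx ⊢
        rw [hx, zero_mul]
      · intro x hx
        simp only [Submodule.mem_bot] at hx ⊢
        have : x ∈ annSubmodule K A := fun a => hx a
        rwa [h, Submodule.mem_bot] at this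
  · constructor
    · intro h
      refine ⟨Set.range e, e.reindex (Equiv.ofInjective e e.injective), ?_, ?_⟩
      · intro i j hij
        rw [Module.Basis.reindex_apply, Module.Basis.reindex_apply]
        exact hnat _ _ fun hc => hij (by
          have := congrArg (Equiv.ofInjective e e.injective) hc
          simpa using this)
      · intro i
        rw [Module.Basis.reindex_apply]
        set k := (Equiv.ofInjective e e.injective).symm i
        intro hsq
        have : e k ∈ annSubmodule K A := by
          refine mem_ann_of_basis e fun j => ?_
          by_cases hkj : k = j
          · rw [← hkj]; exact hsq
          · exact hnat _ _ hkj
        rw [h, Submodule.mem_bot] at this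
        exact e.ne_zero k this
    · rintro ⟨s, b, hb0, hbne⟩
      rw [eq_bot_iff]
      intro x hx
      rw [Submodule.mem_bot]
      have hrepr : ∀ j : s, b.repr x j = 0 := by
        intro j
        have hxj : x * b j = b.repr x j • (b j * b j) := by
          conv_lhs => rw [← b.linearCombination_repr x]
          rw [Finsupp.linearCombination_apply, Finsupp.sum, Finset.sum_mul]
          rw [Finset.sum_eq_single j]
          · rw [smul_mul_assoc]
          · intro i _ hij
            rw [smul_mul_assoc, hb0 i j hij, smul_zero]
          · intro hj
            rw [Finsupp.notMem_support_iff.mp hj, zero_smul, zero_mul]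
        have h0 : b.repr x j • (b j * b j) = 0 := hxj.symm.trans (hx (b j))
        exact (smul_eq_zero.mp h0).resolve_right (hbne j)
      have : b.repr x = 0 := Finsupp.ext hrepr
      have := congrArg b.repr.symm this
      simpa using this
end

section
/- Let A be an evolution algebra with non-zero product. If A has no non-trivial ideals of zero square (i.e., A is semiprime), then A is non-degenerate. Moreover, if A is nondegenerate in the classical sense (a(Aa) = 0 implies a = 0), then A is semiprime. -/
/-- For an evolution algebra with non-zero product: semiprime implies non-degenerate,
and classical nondegeneracy implies semiprime. -/
theorem semiprime_implies_nondegenerate {K A : Type*} [Field K]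
    [NonUnitalNonAssocCommRing A] [Module K A] [SMulCommClass K A A] [IsScalarTower K A A]
    {ι : Type*} (e : Module.Basis ι K A) (hnat : ∀ i j, i ≠ j → e i * e j = 0)
    (hA2 : ∃ a b : A, a * b ≠ 0) :
    ((∀ N : Submodule K A, (∀ x ∈ N, ∀ a : A, x * a ∈ N) →
        (∀ x ∈ N, ∀ y ∈ N, x * y = 0) → N = ⊥) →
      ∃ (s : Set A) (b : Module.Basis s K A),
        (∀ i j : s, i ≠ j → b i * b j = 0) ∧ ∀ i : s, b i * b i ≠ 0) ∧
    ((∀ a : A, (∀ x : A, a * (x * a) = 0) → a = 0) →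
      ∀ N : Submodule K A, (∀ x ∈ N, ∀ a : A, x * a ∈ N) →
        (∀ x ∈ N, ∀ y ∈ N, x * y = 0) → N = ⊥) := by
  constructor
  · intro hsemi
    -- generators: basis vectors of square zero
    set S : Set A := {x | ∃ i, e i = x ∧ e i * e i = 0} with hS
    -- every generator annihilates A
    have hgen : ∀ x ∈ S, ∀ a : A, x * a = 0 := by
      rintro x ⟨i, rfl, hi⟩ a
      have : LinearMap.mulLeft K (e i) = 0 := by
        apply e.ext
        intro j
        by_cases h : i = j
        · subst h; simpa using hi
        · simpa using hnat i j h
      simpa using congrArg (fun f => f a) this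
    -- span of generators is a square-zero ideal
    have hmul : ∀ x ∈ Submodule.span K S, ∀ a : A, x * a = 0 := by
      intro x hx a
      induction hx using Submodule.span_induction with
      | mem y hy => exact hgen y hy a
      | zero => simp
      | add y z _ _ hy hz => rw [add_mul, hy, hz, add_zero]
      | smul c y _ hy => rw [smul_mul_assoc, hy, smul_zero]
    have hbot : Submodule.span K S = ⊥ := by
      apply hsemi
      · intro x hx a
        rw [hmul x hx a]; exact Submodule.zero_mem _
      · intro x hx y _
        exact hmul x hx y
    -- hence every basis vector has nonzero square
    have hne : ∀ i, e i * e i ≠ 0 := by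
      intro i hi
      have : e i ∈ Submodule.span K S := Submodule.subset_span ⟨i, rfl, hi⟩
      rw [hbot, Submodule.mem_bot] at this
      exact e.ne_zero i this
    refine ⟨Set.range e, e.reindexRange, ?_, ?_⟩
    · rintro ⟨-, i, rfl⟩ ⟨-, j, rfl⟩ hij
      rw [e.reindexRange_self i, e.reindexRange_self j]
      apply hnat
      rintro rfl
      exact hij rfl
    · rintro ⟨-, i, rfl⟩
      rw [e.reindexRange_self i]
      exact hne i
  · intro hnd N hideal hsq
    rw [eq_bot_iff]
    intro x hx
    rw [Submodule.mem_bot]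
    apply hnd
    intro y
    exact hsq x hx (y * x) (by rw [mul_comm]; exact hideal x hx y)
end

section
/- The 2-dimensional evolution algebra A over a field K with natural basis {e1, e2} and products e1² = e2, e2² = e1 + e2 is semiprime (has no non-zero ideal I with I² = 0) but is not nondegenerate in the classical sense, since e1(Ae1) = 0 while e1 ≠ 0. -/
/-- The evolution algebra with `e₁² = e₂`, `e₂² = e₁ + e₂` is semiprime but not
classically nondegenerate: `e₁ (A e₁) = 0` while `e₁ ≠ 0`. -/
theorem semiprime_not_classically_nondegenerate {K A : Type*} [Field K]
    [NonUnitalNonAssocCommRing A] [Module K A] [SMulCommClass K A A] [IsScalarTower K A A]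
    (e : Module.Basis (Fin 2) K A)
    (hnat : ∀ i j, i ≠ j → e i * e j = 0)
    (h1 : e 0 * e 0 = e 1)
    (h2 : e 1 * e 1 = e 0 + e 1) :
    (∀ N : Submodule K A, (∀ x ∈ N, ∀ a : A, x * a ∈ N) →
        (∀ x ∈ N, ∀ y ∈ N, x * y = 0) → N = ⊥) ∧
    (∀ x : A, e 0 * (x * e 0) = 0) ∧ e 0 ≠ 0 := by
  have hx : ∀ x : A, x = e.repr x 0 • e 0 + e.repr x 1 • e 1 := by
    intro x
    conv_lhs => rw [← e.sum_repr x]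
    rw [Fin.sum_univ_two]
  have h01 : e 0 * e 1 = 0 := hnat 0 1 (by decide)
  have h10 : e 1 * e 0 = 0 := hnat 1 0 (by decide)
  refine ⟨?_, ?_, ?_⟩
  · intro N hclosed hsq
    rw [Submodule.eq_bot_iff]
    intro x hxN
    have h := hsq x hxN x hxN
    set a := e.repr x 0 with ha
    set b := e.repr x 1 with hb
    have hxe : x = a • e 0 + b • e 1 := hx x
    rw [hxe] at h
    have hexp : (a • e 0 + b • e 1) * (a • e 0 + b • e 1)
        = (b * b) • e 0 + (a * a + b * b) • e 1 := by
      simp only [add_mul, mul_add, smul_mul_assoc, mul_smul_comm, smul_smul,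
        h1, h2, h01, h10, smul_zero, add_zero, zero_add, smul_add]
      module
    rw [hexp] at h
    have h' := congrArg e.repr h
    simp only [map_add, map_smul, Module.Basis.repr_self, map_zero] at h'
    have c0 := DFunLike.congr_fun h' 0
    have c1 := DFunLike.congr_fun h' 1
    simp [Finsupp.single_apply] at c0 c1
    have hb0 : b = 0 := c0
    have ha0 : a = 0 := by simpa [hb0, mul_self_eq_zero] using c1
    rw [hxe, ha0, hb0]
    simp
  · intro x
    rw [hx x]
    simp [add_mul, smul_mul_assoc, mul_smul_comm, h1, h10, h01]
  · exact e.ne_zero 0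
end

section
/- Let A be an evolution algebra with natural basis B = {e_i : i ∈ Λ}. For every k ∈ Λ, the ideal of A generated by e_k² equals the linear span of {e_j² : j ∈ D(k) ∪ {k}}, and the ideal generated by e_k equals K e_k + ⟨e_k²⟩, where D(k) is the set of descendents of k. -/
/-- `j ∈ D¹(i)`: `j` is a first-generation descendent of `i`, i.e. the structure
constant `ω_{ji}` is non-zero. -/
def stepRel {K A : Type*} [Field K] [NonUnitalNonAssocCommRing A] [Module K A]
    [SMulCommClass K A A] [IsScalarTower K A A] {ι : Type*} (e : Module.Basis ι K A)
    (i j : ι) : Prop :=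
  e.repr (e i * e i) j ≠ 0

/-- The ideal of `A` generated by the element `x`. -/
def idealGen (K : Type*) {A : Type*} [Field K] [NonUnitalNonAssocCommRing A] [Module K A]
    [SMulCommClass K A A] [IsScalarTower K A A] (x : A) : Submodule K A :=
  sInf {N : Submodule K A | x ∈ N ∧ ∀ y ∈ N, ∀ a : A, y * a ∈ N}

section Aux

variable {K A : Type*} [Field K] [NonUnitalNonAssocCommRing A] [Module K A]
    [SMulCommClass K A A] [IsScalarTower K A A] {ι : Type*} (e : Module.Basis ι K A)

lemma mul_basis_eq_s15 (hnat : ∀ i j, i ≠ j → e i * e j = 0) (x : A) (i : ι) :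
    x * e i = (e.repr x i) • (e i * e i) := by
  have h : (LinearMap.mulRight K (e i)) = (e.coord i).smulRight (e i * e i) := by
    apply e.ext
    intro j
    by_cases hji : j = i
    · subst hji; simp
    · simp [LinearMap.mulRight_apply, hnat j i hji, Module.Basis.repr_self, Finsupp.single_apply, hji]
  simpa using LinearMap.congr_fun h x

lemma mul_mem_of (hnat : ∀ i j, i ≠ j → e i * e j = 0) (N : Submodule K A) (x : A)
    (h : ∀ j, e.repr x j ≠ 0 → e j * e j ∈ N) (a : A) : x * a ∈ N := by
  have ha : (∑ j ∈ (e.repr a).support, e.repr a j • e j) = a := by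
    conv_rhs => rw [← e.linearCombination_repr a]
    rw [Finsupp.linearCombination_apply, Finsupp.sum]
  rw [← ha, Finset.mul_sum]
  refine Submodule.sum_mem _ fun j _ => ?_
  rw [mul_smul_comm, mul_basis_eq_s15 e hnat x j]
  by_cases hx : e.repr x j = 0
  · simp [hx]
  · exact Submodule.smul_mem _ _ (Submodule.smul_mem _ _ (h j hx))

lemma mem_idealGen_self (x : A) : x ∈ idealGen K x :=
  Submodule.mem_sInf.2 fun _ hN => hN.1

lemma idealGen_closed (x : A) : ∀ y ∈ idealGen K x, ∀ a : A, y * a ∈ idealGen K x :=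
  fun y hy a => Submodule.mem_sInf.2 fun N hN => hN.2 y (Submodule.mem_sInf.1 hy N hN) a

lemma idealGen_le (x : A) (N : Submodule K A) (hx : x ∈ N)
    (hc : ∀ y ∈ N, ∀ a : A, y * a ∈ N) : idealGen K x ≤ N :=
  sInf_le ⟨hx, hc⟩

lemma sq_mem (hnat : ∀ i j, i ≠ j → e i * e j = 0) (x : A) {j i : ι}
    (hj : e j * e j ∈ idealGen K x) (h : stepRel e j i) : e i * e i ∈ idealGen K x := by
  have hm : (e j * e j) * e i ∈ idealGen K x := idealGen_closed x _ hj _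
  rw [mul_basis_eq_s15 e hnat _ i] at hm
  have hsm := Submodule.smul_mem (idealGen K x) (e.repr (e j * e j) i)⁻¹ hm
  rwa [smul_smul, inv_mul_cancel₀ h, one_smul] at hsm

end Aux

/-- The ideal generated by `e_k²` is the span of the squares `e_j²` for `j` a
descendent of `k` or `j = k`; the ideal generated by `e_k` is `K e_k + ⟨e_k²⟩`. -/
theorem ideal_generated_by_basis_element {K A : Type*} [Field K]
    [NonUnitalNonAssocCommRing A] [Module K A] [SMulCommClass K A A] [IsScalarTower K A A]
    {ι : Type*} (e : Module.Basis ι K A) (hnat : ∀ i j, i ≠ j → e i * e j = 0) (k : ι) :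
    idealGen K (e k * e k) =
      Submodule.span K
        {y : A | ∃ j : ι, (j = k ∨ Relation.TransGen (stepRel e) k j) ∧ y = e j * e j} ∧
    idealGen K (e k) = Submodule.span K {e k} ⊔ idealGen K (e k * e k) := by
  set S : Set A :=
    {y : A | ∃ j : ι, (j = k ∨ Relation.TransGen (stepRel e) k j) ∧ y = e j * e j} with hS
  set M : Submodule K A := Submodule.span K S with hM
  -- M is closed under right multiplication
  have hMclosed : ∀ y ∈ M, ∀ a : A, y * a ∈ M := by
    intro y hy a
    induction hy using Submodule.span_induction with
    | mem z hz =>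
      obtain ⟨j, hjk, rfl⟩ := hz
      refine mul_mem_of e hnat M _ (fun i hi => ?_) a
      have hstep : stepRel e j i := hi
      refine Submodule.subset_span ⟨i, Or.inr ?_, rfl⟩
      rcases hjk with rfl | hjk
      · exact Relation.TransGen.single hstep
      · exact hjk.tail hstep
    | zero => rw [zero_mul]; exact M.zero_mem
    | add y z _ _ hy hz => rw [add_mul]; exact M.add_mem hy hz
    | smul c y _ hy => rw [smul_mul_assoc]; exact M.smul_mem c hy
  have part1 : idealGen K (e k * e k) = M := by
    apply le_antisymm
    · exact idealGen_le _ M (Submodule.subset_span ⟨k, Or.inl rfl, rfl⟩) hMclosed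
    · rw [hM, Submodule.span_le]
      rintro y ⟨j, hjk, rfl⟩
      rcases hjk with rfl | hjk
      · exact mem_idealGen_self _
      · induction hjk with
        | single h => exact sq_mem e hnat _ (mem_idealGen_self _) h
        | tail _ h ih => exact sq_mem e hnat _ ih h
  refine ⟨part1, ?_⟩
  set I : Submodule K A := idealGen K (e k * e k) with hI
  have hek_mul : ∀ a : A, e k * a ∈ I := by
    intro a
    refine mul_mem_of e hnat I _ (fun i hi => ?_) a
    have : i = k := by
      by_contra hik
      apply hi
      simp [Module.Basis.repr_self, Finsupp.single_apply, Ne.symm hik]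
    subst this
    exact mem_idealGen_self _
  apply le_antisymm
  · refine idealGen_le _ _ (le_sup_left (a := Submodule.span K {e k})
      (Submodule.mem_span_singleton_self (e k))) ?_
    intro y hy a
    rw [Submodule.mem_sup] at hy
    obtain ⟨u, hu, v, hv, rfl⟩ := hy
    obtain ⟨c, rfl⟩ := Submodule.mem_span_singleton.1 hu
    rw [add_mul, smul_mul_assoc]
    refine Submodule.add_mem _ ?_ ?_
    · exact le_sup_right (a := Submodule.span K {e k}) (Submodule.smul_mem I c (hek_mul a))
    · exact le_sup_right (a := Submodule.span K {e k}) (idealGen_closed _ _ hv a)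
  · refine sup_le ?_ ?_
    · rw [Submodule.span_le]
      rintro y rfl
      exact mem_idealGen_self _
    · exact idealGen_le _ _ (idealGen_closed (e k) _ (mem_idealGen_self _) _)
        (idealGen_closed (e k))
end

section
/- For any element x of an evolution algebra A, the ideal of A generated by x has vector-space dimension at most countable. Consequently every simple evolution algebra has dimension at most countable. -/
lemma idealGen_mem_self {K A : Type*} [Field K] [NonUnitalNonAssocCommRing A] [Module K A]
    [SMulCommClass K A A] [IsScalarTower K A A] (x : A) : x ∈ idealGen K x :=
  Submodule.mem_sInf.mpr fun _ hN => hN.1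

lemma idealGen_mul_mem {K A : Type*} [Field K] [NonUnitalNonAssocCommRing A] [Module K A]
    [SMulCommClass K A A] [IsScalarTower K A A] {x y : A} (hy : y ∈ idealGen K x) (a : A) :
    y * a ∈ idealGen K x :=
  Submodule.mem_sInf.mpr fun N hN => hN.2 y (Submodule.mem_sInf.mp hy N hN) a

lemma rank_idealGen_le {K A : Type*} [Field K]
    [NonUnitalNonAssocCommRing A] [Module K A] [SMulCommClass K A A] [IsScalarTower K A A]
    {ι : Type*} (e : Module.Basis ι K A) (hnat : ∀ i j, i ≠ j → e i * e j = 0) (x : A) :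
    Module.rank K (idealGen K x) ≤ Cardinal.aleph0 := by
  classical
  set f : ι → Finset ι := fun i => (e.repr (e i * e i)).support with hf
  set T : ℕ → Finset ι := fun n => Nat.rec (e.repr x).support (fun _ s => s ∪ s.biUnion f) n
    with hT
  set S : Set ι := ⋃ n, (T n : Set ι) with hS
  set N : Submodule K A := Submodule.span K (e '' S) with hN
  have hTsub : ∀ n, (T n : Set ι) ⊆ S := fun n => Set.subset_iUnion (fun n => (T n : Set ι)) n
  have hx : x ∈ N := by
    refine Submodule.span_mono (Set.image_mono (f := e) ?_) (e.mem_span_repr_support x)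
    exact (hTsub 0)
  have hsq : ∀ i ∈ S, e i * e i ∈ N := by
    intro i hi
    obtain ⟨n, hn⟩ : ∃ n, i ∈ T n := by
      simpa [hS, Set.mem_iUnion] using hi
    have hfi : (f i : Set ι) ⊆ S := by
      intro j hj
      apply hTsub (n + 1)
      simp only [hT]
      exact Finset.mem_union_right _ (Finset.mem_biUnion.mpr ⟨i, hn, hj⟩)
    exact Submodule.span_mono (Set.image_mono (f := e) hfi) (e.mem_span_repr_support (e i * e i))
  have hclosed : ∀ y ∈ N, ∀ a : A, y * a ∈ N := by
    intro y hy a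
    have h1 : N ≤ N.comap (LinearMap.mulRight K a) := by
      rw [hN, Submodule.span_le]
      rintro _ ⟨i, hi, rfl⟩
      have h2 : (⊤ : Submodule K A) ≤ N.comap (LinearMap.mulLeft K (e i)) := by
        rw [← e.span_eq, Submodule.span_le]
        rintro _ ⟨j, rfl⟩
        show e i * e j ∈ N
        by_cases hij : i = j
        · subst hij; exact hsq i hi
        · rw [hnat i j hij]; exact N.zero_mem
      have := h2 Submodule.mem_top (x := a)
      simpa using this
    exact h1 hy
  have hle : idealGen K x ≤ N := sInf_le ⟨hx, hclosed⟩
  have hScount : S.Countable := Set.countable_iUnion fun n => (T n).countable_toSet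
  calc Module.rank K (idealGen K x) ≤ Module.rank K N := Submodule.rank_mono hle
    _ ≤ Cardinal.mk (e '' S) := rank_span_le _
    _ ≤ Cardinal.aleph0 := (hScount.image e).le_aleph0

/-- In an evolution algebra the ideal generated by any element has dimension at most
countable; consequently every simple evolution algebra has dimension at most countable. -/
theorem ideal_generated_rank_le_aleph0 {K A : Type*} [Field K]
    [NonUnitalNonAssocCommRing A] [Module K A] [SMulCommClass K A A] [IsScalarTower K A A]
    {ι : Type*} (e : Module.Basis ι K A) (hnat : ∀ i j, i ≠ j → e i * e j = 0) :
    (∀ x : A, Module.rank K (idealGen K x) ≤ Cardinal.aleph0) ∧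
    ((∃ a b : A, a * b ≠ 0) ∧
        (∀ N : Submodule K A, (∀ x ∈ N, ∀ a : A, x * a ∈ N) → N = ⊥ ∨ N = ⊤) →
      Module.rank K A ≤ Cardinal.aleph0) := by
  refine ⟨rank_idealGen_le e hnat, ?_⟩
  rintro ⟨⟨a, b, hab⟩, hsimple⟩
  have h := hsimple (idealGen K a) (fun y hy c => idealGen_mul_mem hy c)
  rcases h with h | h
  · exact absurd (h ▸ idealGen_mul_mem (idealGen_mem_self a) b) (fun hm => hab ((Submodule.mem_bot K).mp hm))
  · have := rank_idealGen_le e hnat a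
    rwa [h, rank_top K A] at this
end

section
/- Let A be a non-degenerate evolution algebra with natural basis B = {e_i : i ∈ Λ}, and suppose A = ⊕_{γ ∈ Γ} I_γ is a direct sum of ideals I_γ. Then for each i ∈ Λ there is a unique γ with e_i ∈ I_γ, and there is a partition Λ = ⊔_{γ} Λ_γ such that I_γ = span{e_i : i ∈ Λ_γ} for every γ. -/
/-- If a non-degenerate evolution algebra decomposes as a direct sum of ideals
`A = ⊕_γ I_γ`, then every natural basis element lies in exactly one summand, and there
is a partition `Λ = ⊔_γ Λ_γ` of the index set with `I_γ = span {e_i : i ∈ Λ_γ}`. -/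
theorem direct_sum_decomposition_basis {K A : Type*} [Field K]
    [NonUnitalNonAssocCommRing A] [Module K A] [SMulCommClass K A A] [IsScalarTower K A A]
    {ι : Type*} (e : Module.Basis ι K A) (hnat : ∀ i j, i ≠ j → e i * e j = 0)
    (hnd : ∀ x : A, (∀ a : A, x * a = 0) → x = 0)
    {Γ : Type*} (I : Γ → Submodule K A)
    (hideal : ∀ γ, ∀ x ∈ I γ, ∀ a : A, x * a ∈ I γ)
    (hindep : iSupIndep I)
    (hspan : ⨆ γ, I γ = ⊤) :
    (∀ i : ι, ∃! γ : Γ, e i ∈ I γ) ∧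
    ∃ Λs : Γ → Set ι, Pairwise (Function.onFun Disjoint Λs) ∧
      (⋃ γ, Λs γ) = Set.univ ∧ ∀ γ, I γ = Submodule.span K (e '' Λs γ) := by
  classical
  -- multiplication by a basis element picks out one coordinate
  have hmul : ∀ (j : ι) (x : A), e j * x = e.repr x j • (e j * e j) := by
    intro j x
    have h : LinearMap.mul K A (e j) = (e.coord j).smulRight (e j * e j) := by
      refine e.ext fun k => ?_
      by_cases hk : k = j
      · subst hk
        simp [Module.Basis.coord_apply]
      · simp [Module.Basis.coord_apply, hnat j k (Ne.symm hk), Finsupp.single_apply, hk]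
    have := congrFun (congrArg DFunLike.coe h) x
    simpa [Module.Basis.coord_apply] using this
  -- squares of basis elements are nonzero
  have hsq : ∀ j, e j * e j ≠ 0 := by
    intro j h
    refine e.ne_zero j (hnd _ fun a => ?_)
    rw [hmul j a, h, smul_zero]
  -- each square lies in some summand
  have hkey : ∀ j : ι, ∃ γ, e j * e j ∈ I γ := by
    intro j
    have hj : e j ∈ ⨆ γ, I γ := hspan ▸ Submodule.mem_top
    obtain ⟨f, hf, hsum⟩ := (Submodule.mem_iSup_iff_exists_finsupp I _).1 hj
    have h1 : (∑ γ ∈ f.support, e.repr (f γ) j) = 1 := by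
      have := congrArg (fun x => e.repr x j) hsum
      simpa [Finsupp.sum, map_sum, Finsupp.finset_sum_apply] using this
    have h2 : ∃ γ ∈ f.support, e.repr (f γ) j ≠ 0 := by
      by_contra hco
      push_neg at hco
      rw [Finset.sum_eq_zero hco] at h1
      exact zero_ne_one h1
    obtain ⟨γ, _, hcoef⟩ := h2
    refine ⟨γ, ?_⟩
    have hmem : e j * f γ ∈ I γ := by
      rw [mul_comm]; exact hideal γ (f γ) (hf γ) (e j)
    rw [hmul j (f γ)] at hmem
    have := Submodule.smul_mem (I γ) (e.repr (f γ) j)⁻¹ hmem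
    rwa [smul_smul, inv_mul_cancel₀ hcoef, one_smul] at this
  -- distinct summands intersect trivially
  have hdisjI : ∀ γ δ : Γ, γ ≠ δ → ∀ x : A, x ∈ I γ → x ∈ I δ → x = 0 := by
    intro γ δ hne x h1 h2
    exact Submodule.disjoint_def.1 (hindep.pairwiseDisjoint hne) x h1 h2
  -- uniqueness of the summand containing the square
  have huniqsq : ∀ (j : ι) (γ δ : Γ), e j * e j ∈ I γ → e j * e j ∈ I δ → γ = δ := by
    intro j γ δ h1 h2
    by_contra hne
    exact hsq j (hdisjI γ δ hne _ h1 h2)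
  set γf : ι → Γ := fun j => (hkey j).choose with hγfdef
  have hγf : ∀ j, e j * e j ∈ I (γf j) := fun j => (hkey j).choose_spec
  set Λs : Γ → Set ι := fun γ => γf ⁻¹' {γ} with hΛs
  -- every summand is contained in the span of its basis elements
  have h2 : ∀ γ, I γ ≤ Submodule.span K (e '' Λs γ) := by
    intro γ x hx
    rw [Module.Basis.mem_span_image]
    intro j hj
    have hc : e.repr x j ≠ 0 := Finsupp.mem_support_iff.1 hj
    have hm : e j * x ∈ I γ := by rw [mul_comm]; exact hideal γ x hx (e j)
    rw [hmul j x] at hm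
    have hm2 := Submodule.smul_mem (I γ) (e.repr x j)⁻¹ hm
    rw [smul_smul, inv_mul_cancel₀ hc, one_smul] at hm2
    exact huniqsq j (γf j) γ (hγf j) hm2
  -- spans over complementary index sets are disjoint
  have hdisj : ∀ γ, ∀ x : A, x ∈ Submodule.span K (e '' Λs γ) →
      x ∈ Submodule.span K (e '' (Λs γ)ᶜ) → x = 0 := by
    intro γ x hx1 hx2
    rw [Module.Basis.mem_span_image] at hx1 hx2
    have : (e.repr x).support = ∅ := by
      rw [← Finset.coe_eq_empty] at *
      have := Set.subset_inter hx1 hx2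
      rwa [Set.inter_compl_self, Set.subset_empty_iff] at this
    have h0 : e.repr x = 0 := Finsupp.support_eq_empty.1 this
    exact (LinearEquiv.map_eq_zero_iff e.repr).1 h0
  -- each basis element lies in its summand
  have hmem_I : ∀ j : ι, e j ∈ I (γf j) := by
    intro j
    have hj : e j ∈ ⨆ γ, I γ := hspan ▸ Submodule.mem_top
    obtain ⟨f, hf, hsum⟩ := (Submodule.mem_iSup_iff_exists_finsupp I _).1 hj
    set γ := γf j with hγ
    have key : e j - f γ = ∑ δ ∈ f.support.erase γ, f δ := by
      rw [Finsupp.sum] at hsum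
      by_cases hmem : γ ∈ f.support
      · rw [← Finset.add_sum_erase _ _ hmem] at hsum
        rw [← hsum]; exact add_sub_cancel_left _ _
      · rw [Finset.erase_eq_of_notMem hmem, hsum,
          Finsupp.notMem_support_iff.1 hmem, sub_zero]
    have hL : e j - f γ ∈ Submodule.span K (e '' Λs γ) := by
      refine sub_mem ?_ (h2 γ (hf γ))
      exact Submodule.subset_span ⟨j, rfl, rfl⟩
    have hR : e j - f γ ∈ Submodule.span K (e '' (Λs γ)ᶜ) := by
      rw [key]
      refine Submodule.sum_mem _ fun δ hδ => ?_
      have hne : δ ≠ γ := (Finset.mem_erase.1 hδ).1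
      have hsub : Λs δ ⊆ (Λs γ)ᶜ := by
        intro k hk
        simp only [hΛs, Set.mem_preimage, Set.mem_singleton_iff] at hk
        simp only [Set.mem_compl_iff, hΛs, Set.mem_preimage, Set.mem_singleton_iff, hk]
        exact hne
      exact Submodule.span_mono (Set.image_mono hsub) (h2 δ (hf δ))
    have h0 : e j - f γ = 0 := hdisj γ _ hL hR
    have : e j = f γ := by linear_combination (norm := module) h0
    rw [this]; exact hf γ
  constructor
  · intro i
    refine ⟨γf i, hmem_I i, fun δ hδ => ?_⟩
    by_contra hne
    exact e.ne_zero i (hdisjI δ (γf i) hne _ hδ (hmem_I i))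
  · refine ⟨Λs, ?_, ?_, ?_⟩
    · intro γ δ hne
      rw [Function.onFun, Set.disjoint_left]
      intro j hjγ hjδ
      simp only [hΛs, Set.mem_preimage, Set.mem_singleton_iff] at hjγ hjδ
      exact hne (hjγ ▸ hjδ ▸ rfl)
    · ext j
      simp only [Set.mem_iUnion, Set.mem_univ, iff_true]
      exact ⟨γf j, rfl⟩
    · intro γ
      refine le_antisymm (h2 γ) (Submodule.span_le.2 ?_)
      rintro x ⟨j, hj, rfl⟩
      simp only [hΛs, Set.mem_preimage, Set.mem_singleton_iff] at hj
      exact hj ▸ hmem_I j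
end

section
/- Every non-degenerate evolution algebra A admits an optimal direct-sum decomposition A = ⊕_{γ ∈ Γ} I_γ into non-zero ideals each of which is an irreducible evolution algebra, and this decomposition is unique up to reordering. -/
/-- `N` (an ideal of `A`, regarded as an algebra with the inherited product) is
irreducible: it is not the direct sum of two non-zero ideals of itself. -/
def IsIrreducibleSummand {K A : Type*} [Field K] [NonUnitalNonAssocCommRing A]
    [Module K A] [SMulCommClass K A A] [IsScalarTower K A A] (N : Submodule K A) : Prop :=
  ¬ ∃ J₁ J₂ : Submodule K A, J₁ ≤ N ∧ J₂ ≤ N ∧ J₁ ≠ ⊥ ∧ J₂ ≠ ⊥ ∧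
      (∀ x ∈ J₁, ∀ a ∈ N, x * a ∈ J₁) ∧ (∀ x ∈ J₂, ∀ a ∈ N, x * a ∈ J₂) ∧
      J₁ ⊓ J₂ = ⊥ ∧ J₁ ⊔ J₂ = N

set_option linter.unusedSectionVars false
set_option maxHeartbeats 1000000

section
variable {K A : Type*} [Field K] [NonUnitalNonAssocCommRing A]
    [Module K A] [SMulCommClass K A A] [IsScalarTower K A A]
    {ι : Type*} (e : Module.Basis ι K A)

lemma evo_mul_basis (hnat : ∀ i j, i ≠ j → e i * e j = 0) (a : A) (j : ι) :
    a * e j = e.repr a j • (e j * e j) := by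
  have h : (LinearMap.mulRight K (e j)) = (e.coord j).smulRight (e j * e j) := by
    refine Module.Basis.ext e fun i => ?_
    simp only [LinearMap.mulRight_apply, LinearMap.smulRight_apply, Module.Basis.coord_apply,
      Module.Basis.repr_self]
    rcases eq_or_ne i j with rfl | h
    · simp
    · rw [Finsupp.single_eq_of_ne h.symm, zero_smul]; exact hnat i j h
  exact DFunLike.congr_fun h a

lemma evo_mul_eq_sum (a b : A) : a * b = (e.repr b).sum fun j c => c • (a * e j) := by
  have h : (LinearMap.mulLeft K a) =
      (Finsupp.linearCombination K fun j => a * e j).comp (e.repr : A →ₗ[K] _) := by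
    refine Module.Basis.ext e fun i => ?_
    simp [Finsupp.linearCombination_single]
  have := DFunLike.congr_fun h b
  simpa [Finsupp.linearCombination_apply, Finsupp.smul_sum] using this

lemma evo_ann (hnd : ∀ x : A, (∀ a : A, x * a = 0) → x = 0) {a : A}
    (h : ∀ j, a * e j = 0) : a = 0 := by
  refine hnd a fun b => ?_
  rw [evo_mul_eq_sum e a b]
  simp [h]

lemma evo_sq_ne_zero (hnat : ∀ i j, i ≠ j → e i * e j = 0)
    (hnd : ∀ x : A, (∀ a : A, x * a = 0) → x = 0) (i : ι) : e i * e i ≠ 0 := by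
  intro h
  refine e.ne_zero i (hnd _ fun a => ?_)
  rw [mul_comm, evo_mul_basis e hnat a i, h, smul_zero]

/-- The evolution graph step relation. -/
def evoStep (i j : ι) : Prop := e.repr (e i * e i) j ≠ 0 ∨ e.repr (e j * e j) i ≠ 0

lemma evoStep_symm {i j : ι} (h : evoStep e i j) : evoStep e j i := Or.symm h

/-- Connectivity relation. -/
def evoRel : ι → ι → Prop := Relation.EqvGen (evoStep e)

/-- A set closed under graph steps. -/
def evoClosed (S : Set ι) : Prop := ∀ i ∈ S, ∀ j, evoStep e i j → j ∈ S

lemma evoRel_iff_closed {S : Set ι} (hS : evoClosed e S) {i j : ι} (h : evoRel e i j) :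
    i ∈ S ↔ j ∈ S := by
  induction h with
  | rel a b hab => exact ⟨fun ha => hS a ha b hab, fun hb => hS b hb a (evoStep_symm e hab)⟩
  | refl a => exact Iff.rfl
  | symm a b _ ih => exact ih.symm
  | trans a b c _ _ ih1 ih2 => exact ih1.trans ih2

def evoClass (i : ι) : Set ι := {j | evoRel e i j}

lemma mem_evoClass_self (i : ι) : i ∈ evoClass e i := Relation.EqvGen.refl i

lemma evoClosed_evoClass (i : ι) : evoClosed e (evoClass e i) :=
  fun j hj k hk => Relation.EqvGen.trans _ _ _ hj (Relation.EqvGen.rel _ _ hk)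

lemma evoClass_eq {i j : ι} (h : evoRel e i j) : evoClass e i = evoClass e j := by
  ext k
  exact ⟨fun hk => Relation.EqvGen.trans _ _ _ (Relation.EqvGen.symm _ _ h) hk, fun hk => Relation.EqvGen.trans _ _ _ h hk⟩

lemma evo_sq_mem (hS : evoClosed e S) {i : ι} (hi : i ∈ S) :
    e i * e i ∈ Submodule.span K (e '' S) := by
  rw [Module.Basis.mem_span_image]
  intro j hj
  rw [Finset.mem_coe, Finsupp.mem_support_iff] at hj
  exact hS i hi j (Or.inl hj)

lemma evo_ideal (hnat : ∀ i j, i ≠ j → e i * e j = 0) {S : Set ι} (hS : evoClosed e S) :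
    ∀ x ∈ Submodule.span K (e '' S), ∀ a : A, x * a ∈ Submodule.span K (e '' S) := by
  intro x hx a
  rw [evo_mul_eq_sum e x a]
  refine Submodule.sum_mem _ fun j _ => ?_
  dsimp only
  rw [evo_mul_basis e hnat x j]
  rcases eq_or_ne (e.repr x j) 0 with h | h
  · simp [h]
  · have hjS : j ∈ S := (Module.Basis.mem_span_image e).1 hx (Finsupp.mem_support_iff.2 h)
    exact Submodule.smul_mem _ _ (Submodule.smul_mem _ _ (evo_sq_mem e hS hjS))

lemma evo_step_sep (hnat : ∀ i j, i ≠ j → e i * e j = 0)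
    (hnd : ∀ x : A, (∀ a : A, x * a = 0) → x = 0)
    {S : Set ι} {J₁ J₂ : Submodule K A}
    (h₁ : J₁ ≤ Submodule.span K (e '' S)) (h₂ : J₂ ≤ Submodule.span K (e '' S))
    (hI₁ : ∀ x ∈ J₁, ∀ a ∈ Submodule.span K (e '' S), x * a ∈ J₁)
    (hI₂ : ∀ x ∈ J₂, ∀ a ∈ Submodule.span K (e '' S), x * a ∈ J₂)
    (hdisj : J₁ ⊓ J₂ = ⊥)
    {i j : ι} (hiS : i ∈ S) (hjS : j ∈ S) (hi : e i ∈ J₁) (hj : e j ∈ J₂) :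
    ¬ evoStep e i j := by
  have hiM : e i ∈ Submodule.span K (e '' S) := Submodule.subset_span ⟨i, hiS, rfl⟩
  have hjM : e j ∈ Submodule.span K (e '' S) := Submodule.subset_span ⟨j, hjS, rfl⟩
  rintro (h | h)
  · have hsq : e i * e i ∈ J₁ := hI₁ _ hi _ hiM
    have p1 : (e i * e i) * e j ∈ J₁ := hI₁ _ hsq _ hjM
    have p2 : (e i * e i) * e j ∈ J₂ := by rw [mul_comm]; exact hI₂ _ hj _ (h₁ hsq)
    have h0 : (e i * e i) * e j = 0 := by
      have : (e i * e i) * e j ∈ J₁ ⊓ J₂ := ⟨p1, p2⟩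
      rwa [hdisj, Submodule.mem_bot] at this
    rw [evo_mul_basis e hnat _ j, smul_eq_zero] at h0
    exact h0.elim h (evo_sq_ne_zero e hnat hnd j)
  · have hsq : e j * e j ∈ J₂ := hI₂ _ hj _ hjM
    have p1 : (e j * e j) * e i ∈ J₂ := hI₂ _ hsq _ hiM
    have p2 : (e j * e j) * e i ∈ J₁ := by rw [mul_comm]; exact hI₁ _ hi _ (h₂ hsq)
    have h0 : (e j * e j) * e i = 0 := by
      have : (e j * e j) * e i ∈ J₁ ⊓ J₂ := ⟨p2, p1⟩
      rwa [hdisj, Submodule.mem_bot] at this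
    rw [evo_mul_basis e hnat _ i, smul_eq_zero] at h0
    exact h0.elim h (evo_sq_ne_zero e hnat hnd i)

lemma evo_split (hnat : ∀ i j, i ≠ j → e i * e j = 0)
    (hnd : ∀ x : A, (∀ a : A, x * a = 0) → x = 0)
    {S : Set ι} {J₁ J₂ : Submodule K A}
    (h₁ : J₁ ≤ Submodule.span K (e '' S)) (h₂ : J₂ ≤ Submodule.span K (e '' S))
    (hI₁ : ∀ x ∈ J₁, ∀ a ∈ Submodule.span K (e '' S), x * a ∈ J₁)
    (hI₂ : ∀ x ∈ J₂, ∀ a ∈ Submodule.span K (e '' S), x * a ∈ J₂)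
    (hdisj : J₁ ⊓ J₂ = ⊥) (hsup : J₁ ⊔ J₂ = Submodule.span K (e '' S)) :
    ∀ i ∈ S, e i ∈ J₁ ∨ e i ∈ J₂ := by
  have hmem : ∀ j, j ∈ S → ∃ y ∈ J₁, ∃ z ∈ J₂, y + z = e j := by
    intro j hj
    exact Submodule.mem_sup.1 (hsup ▸ Submodule.subset_span ⟨j, hj, rfl⟩)
  choose! u hu v hv huv using hmem
  have hzero : ∀ x, x ∈ J₁ → x ∈ J₂ → x = 0 := by
    intro x m1 m2
    have : x ∈ J₁ ⊓ J₂ := ⟨m1, m2⟩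
    rwa [hdisj, Submodule.mem_bot] at this
  have huv0 : ∀ j ∈ S, ∀ k ∈ S, u j * v k = 0 := by
    intro j hj k hk
    refine hzero _ (hI₁ _ (hu j hj) _ (h₂ (hv k hk))) ?_
    rw [mul_comm]; exact hI₂ _ (hv k hk) _ (h₁ (hu j hj))
  have huu0 : ∀ j ∈ S, ∀ k ∈ S, j ≠ k → u j * u k = 0 := by
    intro j hj k hk hjk
    have h0 : u j * u k + v j * v k = 0 := by
      have he : e j * e k = 0 := hnat j k hjk
      rw [← huv j hj, ← huv k hk, add_mul, mul_add, mul_add, huv0 j hj k hk] at he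
      rw [show v j * u k = 0 by rw [mul_comm]; exact huv0 k hk j hj] at he
      rw [add_zero, zero_add] at he
      exact he
    have m1 : u j * u k ∈ J₁ := hI₁ _ (hu j hj) _ (h₁ (hu k hk))
    have m2 : u j * u k ∈ J₂ := by
      have : u j * u k = -(v j * v k) := by rw [eq_neg_iff_add_eq_zero]; exact h0
      rw [this]
      exact Submodule.neg_mem _ (hI₂ _ (hv j hj) _ (h₂ (hv k hk)))
    exact hzero _ m1 m2
  intro i hi
  have hue : ∀ k, k ≠ i → u i * e k = 0 := by
    intro k hk
    by_cases hkS : k ∈ S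
    · rw [← huv k hkS, mul_add, huu0 i hi k hkS (Ne.symm hk), huv0 i hi k hkS, add_zero]
    · rw [evo_mul_basis e hnat (u i) k]
      have hrk : e.repr (u i) k = 0 := by
        by_contra hne
        exact hkS ((Module.Basis.mem_span_image e).1 (h₁ (hu i hi)) (Finsupp.mem_support_iff.2 hne))
      rw [hrk, zero_smul]
  have hve : ∀ k, k ≠ i → v i * e k = 0 := by
    intro k hk
    by_cases hkS : k ∈ S
    · rw [← huv k hkS, mul_add]
      rw [show v i * u k = 0 by rw [mul_comm]; exact huv0 k hkS i hi]
      rw [show v i * v k = 0 from ?_, add_zero]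
      · have h0 : u i * u k + v i * v k = 0 := by
          have he : e i * e k = 0 := hnat i k (Ne.symm hk)
          rw [← huv i hi, ← huv k hkS, add_mul, mul_add, mul_add, huv0 i hi k hkS] at he
          rw [show v i * u k = 0 by rw [mul_comm]; exact huv0 k hkS i hi] at he
          rw [add_zero, zero_add] at he
          exact he
        rw [huu0 i hi k hkS (Ne.symm hk), zero_add] at h0
        exact h0
    · rw [evo_mul_basis e hnat (v i) k]
      have hrk : e.repr (v i) k = 0 := by
        by_contra hne
        exact hkS ((Module.Basis.mem_span_image e).1 (h₂ (hv i hi)) (Finsupp.mem_support_iff.2 hne))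
      rw [hrk, zero_smul]
  by_cases hu0 : u i = 0
  · right; rw [← huv i hi, hu0, zero_add]; exact hv i hi
  by_cases hv0 : v i = 0
  · left; rw [← huv i hi, hv0, add_zero]; exact hu i hi
  exfalso
  have hiM : e i ∈ Submodule.span K (e '' S) := Submodule.subset_span ⟨i, hi, rfl⟩
  have hui : u i * e i ≠ 0 := by
    intro h
    refine hu0 (evo_ann e hnd fun k => ?_)
    rcases eq_or_ne k i with rfl | hk
    · exact h
    · exact hue k hk
  have hvi : v i * e i ≠ 0 := by
    intro h
    refine hv0 (evo_ann e hnd fun k => ?_)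
    rcases eq_or_ne k i with rfl | hk
    · exact h
    · exact hve k hk
  have h1 : u i * e i = e.repr (u i) i • (e i * e i) := evo_mul_basis e hnat _ i
  have h2 : v i * e i = e.repr (v i) i • (e i * e i) := evo_mul_basis e hnat _ i
  have c1 : e.repr (u i) i ≠ 0 := fun h => hui (by rw [h1, h, zero_smul])
  have c2 : e.repr (v i) i ≠ 0 := fun h => hvi (by rw [h2, h, zero_smul])
  have m1 : u i * e i ∈ J₁ := hI₁ _ (hu i hi) _ hiM
  have m2 : v i * e i ∈ J₂ := hI₂ _ (hv i hi) _ hiM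
  have sq1 : e i * e i ∈ J₁ := by
    have := J₁.smul_mem (e.repr (u i) i)⁻¹ m1
    rwa [h1, smul_smul, inv_mul_cancel₀ c1, one_smul] at this
  have sq2 : e i * e i ∈ J₂ := by
    have := J₂.smul_mem (e.repr (v i) i)⁻¹ m2
    rwa [h2, smul_smul, inv_mul_cancel₀ c2, one_smul] at this
  exact evo_sq_ne_zero e hnat hnd i (hzero _ sq1 sq2)


lemma evo_exists_basis_mem (hnat : ∀ i j, i ≠ j → e i * e j = 0)
    (hnd : ∀ x : A, (∀ a : A, x * a = 0) → x = 0)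
    {S : Set ι} {J₁ J₂ : Submodule K A}
    (h₁ : J₁ ≤ Submodule.span K (e '' S)) (h₂ : J₂ ≤ Submodule.span K (e '' S))
    (hI₁ : ∀ x ∈ J₁, ∀ a ∈ Submodule.span K (e '' S), x * a ∈ J₁)
    (hI₂ : ∀ x ∈ J₂, ∀ a ∈ Submodule.span K (e '' S), x * a ∈ J₂)
    (hdisj : J₁ ⊓ J₂ = ⊥) (hsup : J₁ ⊔ J₂ = Submodule.span K (e '' S))
    (hne : J₁ ≠ ⊥) : ∃ i ∈ S, e i ∈ J₁ := by
  obtain ⟨x, hx, hx0⟩ := Submodule.exists_mem_ne_zero_of_ne_bot hne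
  have hsupp : ∃ i, e.repr x i ≠ 0 := by
    by_contra h
    push_neg at h
    exact hx0 (by simpa using e.repr.map_eq_zero_iff.1 (Finsupp.ext h))
  obtain ⟨i, hri⟩ := hsupp
  have hiS : i ∈ S := (Module.Basis.mem_span_image e).1 (h₁ hx) (Finsupp.mem_support_iff.2 hri)
  have hiM : e i ∈ Submodule.span K (e '' S) := Submodule.subset_span ⟨i, hiS, rfl⟩
  have hm : x * e i ∈ J₁ := hI₁ _ hx _ hiM
  rw [evo_mul_basis e hnat x i] at hm
  have hsq : e i * e i ∈ J₁ := by
    have := J₁.smul_mem (e.repr x i)⁻¹ hm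
    rwa [smul_smul, inv_mul_cancel₀ hri, one_smul] at this
  refine ⟨i, hiS, ?_⟩
  rcases evo_split e hnat hnd h₁ h₂ hI₁ hI₂ hdisj hsup i hiS with h | h
  · exact h
  · exfalso
    have : e i * e i ∈ J₂ := hI₂ _ h _ hiM
    have h0 : e i * e i = 0 := by
      have hb : e i * e i ∈ J₁ ⊓ J₂ := ⟨hsq, this⟩
      rwa [hdisj, Submodule.mem_bot] at hb
    exact evo_sq_ne_zero e hnat hnd i h0

lemma evo_class_irred (hnat : ∀ i j, i ≠ j → e i * e j = 0)
    (hnd : ∀ x : A, (∀ a : A, x * a = 0) → x = 0) (i₀ : ι) :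
    IsIrreducibleSummand (Submodule.span K (e '' evoClass e i₀)) := by
  set C := evoClass e i₀ with hCdef
  rintro ⟨J₁, J₂, h₁, h₂, hne₁, hne₂, hI₁, hI₂, hdisj, hsup⟩
  have hCc : evoClosed e C := evoClosed_evoClass e i₀
  have hdisj' : J₂ ⊓ J₁ = ⊥ := by rwa [inf_comm] at hdisj
  have hsup' : J₂ ⊔ J₁ = Submodule.span K (e '' C) := by rwa [sup_comm] at hsup
  obtain ⟨i, hiC, hiJ₁⟩ :=
    evo_exists_basis_mem e hnat hnd h₁ h₂ hI₁ hI₂ hdisj hsup hne₁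
  obtain ⟨j, hjC, hjJ₂⟩ :=
    evo_exists_basis_mem e hnat hnd h₂ h₁ hI₂ hI₁ hdisj' hsup' hne₂
  have hrel : evoRel e i j := Relation.EqvGen.trans _ _ _ (Relation.EqvGen.symm _ _ hiC) hjC
  have key : ∀ a b, evoRel e a b → ((a ∈ C ∧ e a ∈ J₁) ↔ (b ∈ C ∧ e b ∈ J₁)) := by
    intro a b h
    induction h with
    | rel a b hab =>
      constructor
      · rintro ⟨haC, haJ⟩
        have hbC : b ∈ C := hCc a haC b hab
        refine ⟨hbC, ?_⟩
        rcases evo_split e hnat hnd h₁ h₂ hI₁ hI₂ hdisj hsup b hbC with hb | hb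
        · exact hb
        · exact absurd hab
            (evo_step_sep e hnat hnd h₁ h₂ hI₁ hI₂ hdisj haC hbC haJ hb)
      · rintro ⟨hbC, hbJ⟩
        have haC : a ∈ C := hCc b hbC a (evoStep_symm e hab)
        refine ⟨haC, ?_⟩
        rcases evo_split e hnat hnd h₁ h₂ hI₁ hI₂ hdisj hsup a haC with ha | ha
        · exact ha
        · exact absurd (evoStep_symm e hab)
            (evo_step_sep e hnat hnd h₁ h₂ hI₁ hI₂ hdisj hbC haC hbJ ha)
    | refl a => exact Iff.rfl
    | symm _ _ _ ih => exact ih.symm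
    | trans _ _ _ _ _ ih1 ih2 => exact ih1.trans ih2
  have hjJ₁ : e j ∈ J₁ := ((key i j hrel).1 ⟨hiC, hiJ₁⟩).2
  have h0 : e j = 0 := by
    have hb : e j ∈ J₁ ⊓ J₂ := ⟨hjJ₁, hjJ₂⟩
    rwa [hdisj, Submodule.mem_bot] at hb
  exact e.ne_zero j h0
end

/-- Every non-degenerate evolution algebra admits an optimal direct-sum decomposition
into non-zero irreducible ideals, unique up to reordering (here: as a set of
submodules). -/
theorem optimal_decomposition_exists_unique {K A : Type*} [Field K]
    [NonUnitalNonAssocCommRing A] [Module K A] [SMulCommClass K A A] [IsScalarTower K A A]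
    {ι : Type*} (e : Module.Basis ι K A) (hnat : ∀ i j, i ≠ j → e i * e j = 0)
    (hnd : ∀ x : A, (∀ a : A, x * a = 0) → x = 0) :
    ∃ Γ : Set (Submodule K A),
      (∀ N ∈ Γ, N ≠ ⊥ ∧ (∀ x ∈ N, ∀ a : A, x * a ∈ N) ∧ IsIrreducibleSummand N) ∧
      sSupIndep Γ ∧ sSup Γ = ⊤ ∧
      ∀ Γ' : Set (Submodule K A),
        (∀ N ∈ Γ', N ≠ ⊥ ∧ (∀ x ∈ N, ∀ a : A, x * a ∈ N) ∧ IsIrreducibleSummand N) →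
        sSupIndep Γ' → sSup Γ' = ⊤ → Γ' = Γ := by
  classical
  refine ⟨(fun C => Submodule.span K (e '' C)) '' {C : Set ι | ∃ i, C = evoClass e i},
    ?_, ?_, ?_, ?_⟩
  · rintro N ⟨C, ⟨i₀, rfl⟩, rfl⟩
    refine ⟨?_, fun x hx a => evo_ideal e hnat (evoClosed_evoClass e i₀) x hx a,
      evo_class_irred e hnat hnd i₀⟩
    intro hb
    rw [show ((fun C => Submodule.span K (e '' C)) (evoClass e i₀) : Submodule K A)
      = Submodule.span K (e '' evoClass e i₀) from rfl] at hb
    have hmem : e i₀ ∈ Submodule.span K (e '' evoClass e i₀) :=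
      Submodule.subset_span ⟨i₀, mem_evoClass_self e i₀, rfl⟩
    rw [hb, Submodule.mem_bot] at hmem
    exact e.ne_zero i₀ hmem
  · rintro N hN
    obtain ⟨C, ⟨i₀, rfl⟩, rfl⟩ := hN
    have hbig : Disjoint (Submodule.span K (e '' evoClass e i₀))
        (Submodule.span K (e '' (evoClass e i₀)ᶜ)) :=
      e.linearIndependent.disjoint_span_image disjoint_compl_right
    refine hbig.mono_right (sSup_le ?_)
    intro X hX
    obtain ⟨hX1, hne⟩ := hX
    obtain ⟨C', ⟨i₁, rfl⟩, rfl⟩ := hX1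
    refine Submodule.span_mono (Set.image_mono fun j hj => ?_)
    intro hjC
    refine hne (Set.mem_singleton_iff.2 ?_)
    have h1 : evoClass e i₁ = evoClass e j := evoClass_eq e hj
    have h2 : evoClass e i₀ = evoClass e j := evoClass_eq e hjC
    simp only []
    rw [h1, h2]
  · apply le_antisymm le_top
    rw [← e.span_eq]
    refine Submodule.span_le.2 ?_
    rintro _ ⟨i, rfl⟩
    have hm : Submodule.span K (e '' evoClass e i) ∈
        (fun C => Submodule.span K (e '' C)) '' {C : Set ι | ∃ i, C = evoClass e i} :=
      ⟨evoClass e i, ⟨i, rfl⟩, rfl⟩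
    exact le_sSup hm (Submodule.subset_span ⟨i, mem_evoClass_self e i, rfl⟩)
  · intro Γ' hprops hindep hsupΓ
    have hMuniv : Submodule.span K (e '' (Set.univ : Set ι)) = ⊤ := by
      rw [Set.image_univ, e.span_eq]
    have hstruct : ∀ N ∈ Γ', ∃ i₀ : ι, N = Submodule.span K (e '' evoClass e i₀) ∧
        evoClass e i₀ = {i | e i ∈ N} := by
      intro N hN
      set J : Submodule K A := sSup (Γ' \ {N}) with hJ
      have hJ_ideal : ∀ x ∈ J, ∀ a : A, x * a ∈ J := by
        intro x hx a
        have hmem : ∀ p ∈ Γ' \ {N}, Submodule.map (LinearMap.mulRight K a) p ≤ p := by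
          intro p hp
          refine Submodule.map_le_iff_le_comap.2 fun z hz => ?_
          exact (hprops p hp.1).2.1 z hz a
        have hle : Submodule.map (LinearMap.mulRight K a) J ≤ J := by
          conv_lhs => rw [hJ, sSup_eq_iSup', Submodule.map_iSup]
          exact iSup_le fun p => le_trans (hmem p p.2) (le_sSup p.2)
        exact hle ⟨x, hx, rfl⟩
      have hdisjNJ : Disjoint N J := hindep hN
      have hsupNJ : N ⊔ J = ⊤ := by
        rw [hJ, ← sSup_insert, Set.insert_diff_singleton, Set.insert_eq_of_mem hN, hsupΓ]
      have h₁ : N ≤ Submodule.span K (e '' (Set.univ : Set ι)) := hMuniv.symm ▸ le_top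
      have h₂ : J ≤ Submodule.span K (e '' (Set.univ : Set ι)) := hMuniv.symm ▸ le_top
      have hI₁ : ∀ x ∈ N, ∀ a ∈ Submodule.span K (e '' (Set.univ : Set ι)), x * a ∈ N :=
        fun x hx a _ => (hprops N hN).2.1 x hx a
      have hI₂ : ∀ x ∈ J, ∀ a ∈ Submodule.span K (e '' (Set.univ : Set ι)), x * a ∈ J :=
        fun x hx a _ => hJ_ideal x hx a
      have hdisj' : N ⊓ J = ⊥ := disjoint_iff.1 hdisjNJ
      have hsup' : N ⊔ J = Submodule.span K (e '' (Set.univ : Set ι)) := by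
        rw [hMuniv, hsupNJ]
      have hdichot : ∀ i, e i ∈ N ∨ e i ∈ J := fun i =>
        evo_split e hnat hnd h₁ h₂ hI₁ hI₂ hdisj' hsup' i trivial
      have hinNnotJ : ∀ x ∈ N, x ∈ J → x = 0 := by
        intro x m1 m2
        have hx : x ∈ N ⊓ J := ⟨m1, m2⟩
        rwa [hdisj', Submodule.mem_bot] at hx
      set SN : Set ι := {i | e i ∈ N} with hSN
      have hsupp_mem : ∀ x ∈ N, ∀ i, e.repr x i ≠ 0 → e i ∈ N := by
        intro x hx i hri
        have hm : x * e i ∈ N := (hprops N hN).2.1 x hx (e i)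
        rw [evo_mul_basis e hnat x i] at hm
        have hsq : e i * e i ∈ N := by
          have hs := N.smul_mem (e.repr x i)⁻¹ hm
          rwa [smul_smul, inv_mul_cancel₀ hri, one_smul] at hs
        rcases hdichot i with h | h
        · exact h
        · exact absurd (hinNnotJ _ hsq (hJ_ideal (e i) h (e i)))
            (evo_sq_ne_zero e hnat hnd i)
      have hNspan : N = Submodule.span K (e '' SN) := by
        refine le_antisymm ?_ (Submodule.span_le.2 ?_)
        · intro x hx
          rw [Module.Basis.mem_span_image]
          intro i hi
          rw [Finset.mem_coe, Finsupp.mem_support_iff] at hi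
          exact hsupp_mem x hx i hi
        · rintro _ ⟨i, hi, rfl⟩
          exact hi
      have hSNclosed : evoClosed e SN := by
        intro i hi j hstep
        rcases hdichot j with h | h
        · exact h
        · exact absurd hstep
            (evo_step_sep e hnat hnd h₁ h₂ hI₁ hI₂ hdisj' trivial trivial hi h)
      obtain ⟨i₀, hi₀⟩ : SN.Nonempty := by
        rcases Set.eq_empty_or_nonempty SN with h | h
        · exfalso
          apply (hprops N hN).1
          rw [hNspan, h]
          simp
        · exact h
      have hsubset : evoClass e i₀ ⊆ SN := fun j hj =>
        (evoRel_iff_closed e hSNclosed hj).1 hi₀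
      have hSNeq : SN = evoClass e i₀ := by
        refine Set.Subset.antisymm ?_ hsubset
        by_contra hcon
        rw [Set.not_subset] at hcon
        obtain ⟨j, hjSN, hjC⟩ := hcon
        have hcompl : evoClosed e (evoClass e i₀)ᶜ := by
          intro a ha b hb hbC
          exact ha (evoClosed_evoClass e i₀ b hbC a (evoStep_symm e hb))
        have hc1 : evoClosed e (SN ∩ evoClass e i₀) := fun a ha b hb =>
          ⟨hSNclosed a ha.1 b hb, evoClosed_evoClass e i₀ a ha.2 b hb⟩
        have hc2 : evoClosed e (SN ∩ (evoClass e i₀)ᶜ) := fun a ha b hb =>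
          ⟨hSNclosed a ha.1 b hb, hcompl a ha.2 b hb⟩
        refine (hprops N hN).2.2 ⟨Submodule.span K (e '' (SN ∩ evoClass e i₀)),
          Submodule.span K (e '' (SN ∩ (evoClass e i₀)ᶜ)), ?_, ?_, ?_, ?_, ?_, ?_, ?_, ?_⟩
        · rw [hNspan]
          exact Submodule.span_mono (Set.image_mono Set.inter_subset_left)
        · rw [hNspan]
          exact Submodule.span_mono (Set.image_mono Set.inter_subset_left)
        · exact (Submodule.ne_bot_iff _).2 ⟨e i₀, Submodule.subset_span
            ⟨i₀, ⟨hi₀, mem_evoClass_self e i₀⟩, rfl⟩, e.ne_zero i₀⟩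
        · exact (Submodule.ne_bot_iff _).2 ⟨e j, Submodule.subset_span
            ⟨j, ⟨hjSN, hjC⟩, rfl⟩, e.ne_zero j⟩
        · exact fun x hx a _ => evo_ideal e hnat hc1 x hx a
        · exact fun x hx a _ => evo_ideal e hnat hc2 x hx a
        · refine disjoint_iff.1 (e.linearIndependent.disjoint_span_image ?_)
          exact Set.disjoint_left.2 fun a ha hb => hb.2 ha.2
        · rw [← Submodule.span_union, ← Set.image_union, Set.inter_union_compl, ← hNspan]
      exact ⟨i₀, by rw [hNspan, hSNeq], hSNeq.symm.trans hSN⟩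
    refine Set.eq_of_subset_of_subset ?_ ?_
    · intro N hN
      obtain ⟨i₀, hN1, _⟩ := hstruct N hN
      exact ⟨evoClass e i₀, ⟨i₀, rfl⟩, hN1.symm⟩
    · rintro N ⟨C, ⟨i, rfl⟩, rfl⟩
      have hcover : ∃ N' ∈ Γ', e i ∈ N' := by
        by_contra hcon
        push_neg at hcon
        have hle : sSup Γ' ≤ Submodule.span K (e '' {k | ∃ N' ∈ Γ', e k ∈ N'}) := by
          refine sSup_le fun N' hN' => ?_
          obtain ⟨i₁, hN1, hN2⟩ := hstruct N' hN'
          rw [hN1]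
          refine Submodule.span_mono (Set.image_mono fun k hk => ?_)
          refine ⟨N', hN', ?_⟩
          have hk' : k ∈ {i | e i ∈ N'} := hN2 ▸ hk
          exact hk'
        rw [hsupΓ] at hle
        have hmem : e i ∈ Submodule.span K (e '' {k | ∃ N' ∈ Γ', e k ∈ N'}) :=
          hle Submodule.mem_top
        obtain ⟨N', hN', hm⟩ := (Module.Basis.self_mem_span_image e).1 hmem
        exact hcon N' hN' hm
      obtain ⟨N', hN', hmem⟩ := hcover
      obtain ⟨i₁, hN1, hN2⟩ := hstruct N' hN'
      have hiC : i ∈ evoClass e i₁ := by rw [hN2]; exact hmem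
      have hclasseq : evoClass e i₁ = evoClass e i := evoClass_eq e hiC
      show Submodule.span K (e '' evoClass e i) ∈ Γ'
      rw [← hclasseq, ← hN1]
      exact hN'
end
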